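/- arXiv:math/9903170 — 7 statements merged into one kernel-verified Lean document; each statement's English description precedes it below -/
import Mathlib

section
/- Let A₀(n) denote the number of permutations of length n containing no 132 pattern and no 123 pattern. Then in the ring of formal power series ℚ[[z]], the generating function F₀(z) = ∑_{n≥0} A₀(n)·zⁿ satisfies (1 - 2z)·F₀(z) = 1 - z. -/
/-- The number of 132 patterns of a permutation `π` of `Fin n`:
triples of indices `i₁ < i₂ < i₃` with `π i₁ < π i₃ < π i₂`. -/
def count132 {n : ℕ} (π : Equiv.Perm (Fin n)) : ℕ :=
  (Finset.univ.filter (fun p : Fin n × Fin n × Fin n =>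
    p.1 < p.2.1 ∧ p.2.1 < p.2.2 ∧ π p.1 < π p.2.2 ∧ π p.2.2 < π p.2.1)).card

/-- The number of 123 patterns of a permutation `π` of `Fin n`:
triples of indices `i₁ < i₂ < i₃` with `π i₁ < π i₂ < π i₃`. -/
def count123 {n : ℕ} (π : Equiv.Perm (Fin n)) : ℕ :=
  (Finset.univ.filter (fun p : Fin n × Fin n × Fin n =>
    p.1 < p.2.1 ∧ p.2.1 < p.2.2 ∧ π p.1 < π p.2.1 ∧ π p.2.1 < π p.2.2)).card

/-- The number of 12 patterns of a permutation `π` of `Fin n`: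
pairs of indices `i₁ < i₂` with `π i₁ < π i₂`. -/
def count12 {n : ℕ} (π : Equiv.Perm (Fin n)) : ℕ :=
  (Finset.univ.filter (fun p : Fin n × Fin n =>
    p.1 < p.2 ∧ π p.1 < π p.2)).card

/-- The number of permutations of length n with no 132 pattern and exactly 0 123 patterns. -/
def A (n : ℕ) : ℕ :=
  (Finset.univ.filter (fun π : Equiv.Perm (Fin n) =>
    count132 π = 0 ∧ count123 π = 0)).card

open Finset

/-- The set of permutations satisfying the staircase condition. -/
def Sset (n : ℕ) : Finset (Equiv.Perm (Fin n)) :=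
  Finset.univ.filter fun π => ∀ i : Fin n, n ≤ (π i : ℕ) + i + 2

lemma card_gt_filter {n : ℕ} (π : Equiv.Perm (Fin n)) (i : Fin n) :
    (Finset.univ.filter fun j => π i < π j).card = n - 1 - (π i : ℕ) := by
  rw [← Fin.card_Ioi (π i)]
  apply Finset.card_bij (fun j _ => π j)
  · intro a ha; simpa using (Finset.mem_filter.mp ha).2
  · intro a _ b _ h; exact π.injective h
  · intro b hb; exact ⟨π.symm b, by simpa using hb, by simp⟩

lemma key_no_two {n : ℕ} (π : Equiv.Perm (Fin n))
    (h : ∀ i : Fin n, n ≤ (π i : ℕ) + i + 2) :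
    ∀ i j k : Fin n, i < j → j < k → π i < π j → π i < π k → False := by
  intro i0 j0 k0 hij0 hjk0 h10 h20
  have hBne : (Finset.univ.filter fun i : Fin n =>
      ∃ j k, i < j ∧ j < k ∧ π i < π j ∧ π i < π k).Nonempty :=
    ⟨i0, Finset.mem_filter.mpr ⟨Finset.mem_univ _, ⟨j0, k0, hij0, hjk0, h10, h20⟩⟩⟩
  obtain ⟨i, hiB, hmin⟩ := Finset.exists_min_image _ id hBne
  simp only [Finset.mem_filter, Finset.mem_univ, true_and] at hiB
  obtain ⟨j, k, hij, hjk, h1, h2⟩ := hiB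
  by_cases hp : ∃ p : Fin n, p < i ∧ π p < π i
  · obtain ⟨p, hpi, hpp⟩ := hp
    have hpB : p ∈ Finset.univ.filter fun i : Fin n =>
        ∃ j k, i < j ∧ j < k ∧ π i < π j ∧ π i < π k := by
      simp only [Finset.mem_filter, Finset.mem_univ, true_and]
      exact ⟨j, k, hpi.trans hij, hjk, hpp.trans h1, hpp.trans h2⟩
    exact absurd (hmin p hpB) (not_le.mpr hpi)
  · push_neg at hp
    have hsub : insert j (insert k (Finset.Iio i)) ⊆
        Finset.univ.filter fun x => π i < π x := by
      intro x hx
      simp only [Finset.mem_insert, Finset.mem_Iio] at hx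
      simp only [Finset.mem_filter, Finset.mem_univ, true_and]
      rcases hx with rfl | rfl | hx
      · exact h1
      · exact h2
      · have hne : π i ≠ π x := fun he => absurd (π.injective he) (ne_of_gt hx)
        exact lt_of_le_of_ne (hp x hx) hne
    have hcard : (insert j (insert k (Finset.Iio i))).card = (i : ℕ) + 2 := by
      have hk : k ∉ Finset.Iio i := by simpa using (hij.trans hjk).not_gt
      have hj : j ∉ insert k (Finset.Iio i) := by
        simp only [Finset.mem_insert, Finset.mem_Iio]
        push_neg
        exact ⟨hjk.ne, hij.le⟩
      rw [Finset.card_insert_of_notMem hj, Finset.card_insert_of_notMem hk, Fin.card_Iio]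
    have hle := Finset.card_le_card hsub
    rw [hcard, card_gt_filter] at hle
    have hI := h i
    have := (π i).isLt
    have := i.isLt
    omega

lemma bound_of_avoids {n : ℕ} (π : Equiv.Perm (Fin n))
    (h132 : count132 π = 0) (h123 : count123 π = 0) :
    ∀ i : Fin n, n ≤ (π i : ℕ) + i + 2 := by
  intro i
  by_contra hlt
  push_neg at hlt
  rw [count132, Finset.card_eq_zero, Finset.filter_eq_empty_iff] at h132
  rw [count123, Finset.card_eq_zero, Finset.filter_eq_empty_iff] at h123
  have hsub : (Finset.univ.filter fun j => π i < π j) ⊆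
      Finset.Iio i ∪ (Finset.univ.filter fun j => i < j ∧ π i < π j) := by
    intro x hx
    simp only [Finset.mem_filter, Finset.mem_univ, true_and] at hx
    simp only [Finset.mem_union, Finset.mem_Iio, Finset.mem_filter, Finset.mem_univ, true_and]
    rcases lt_trichotomy x i with h | rfl | h
    · exact Or.inl h
    · exact absurd hx (lt_irrefl _)
    · exact Or.inr ⟨h, hx⟩
  have hle := Finset.card_le_card hsub
  rw [card_gt_filter] at hle
  have hle2 := Finset.card_union_le (Finset.Iio i)
    (Finset.univ.filter fun j => i < j ∧ π i < π j)
  rw [Fin.card_Iio] at hle2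
  have hT : 1 < (Finset.univ.filter fun j => i < j ∧ π i < π j).card := by
    have := (π i).isLt
    omega
  obtain ⟨a, ha, b, hb, hab⟩ := Finset.one_lt_card.mp hT
  simp only [Finset.mem_filter, Finset.mem_univ, true_and] at ha hb
  have hpab : π a ≠ π b := fun he => hab (π.injective he)
  rcases hab.lt_or_gt with hlt' | hlt'
  · rcases hpab.lt_or_gt with h' | h'
    · exact h123 (Finset.mem_univ (i, a, b)) ⟨ha.1, hlt', ha.2, h'⟩
    · exact h132 (Finset.mem_univ (i, a, b)) ⟨ha.1, hlt', hb.2, h'⟩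
  · rcases hpab.lt_or_gt with h' | h'
    · exact h132 (Finset.mem_univ (i, b, a)) ⟨hb.1, hlt', ha.2, h'⟩
    · exact h123 (Finset.mem_univ (i, b, a)) ⟨hb.1, hlt', hb.2, h'⟩

lemma A_eq_Sset (n : ℕ) : A n = (Sset n).card := by
  unfold A Sset
  congr 1
  apply Finset.filter_congr
  intro π _
  constructor
  · rintro ⟨h132, h123⟩
    exact bound_of_avoids π h132 h123
  · intro h
    constructor
    · rw [count132, Finset.card_eq_zero, Finset.filter_eq_empty_iff]
      rintro p - ⟨h1, h2, h3, h4⟩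
      exact key_no_two π h p.1 p.2.1 p.2.2 h1 h2 (h3.trans h4) h3
    · rw [count123, Finset.card_eq_zero, Finset.filter_eq_empty_iff]
      rintro p - ⟨h1, h2, h3, h4⟩
      exact key_no_two π h p.1 p.2.1 p.2.2 h1 h2 h3 (h3.trans h4)

/-- Extend a permutation of `Fin (n+1)` to `Fin (n+2)` fixing the last element. -/
def ext1 {n : ℕ} (σ : Equiv.Perm (Fin (n + 1))) : Equiv.Perm (Fin (n + 2)) :=
  finSuccEquivLast.trans ((Equiv.optionCongr σ).trans finSuccEquivLast.symm)

lemma ext1_castSucc {n : ℕ} (σ : Equiv.Perm (Fin (n + 1))) (i : Fin (n + 1)) :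
    ext1 σ i.castSucc = (σ i).castSucc := by simp [ext1]

lemma ext1_last {n : ℕ} (σ : Equiv.Perm (Fin (n + 1))) :
    ext1 σ (Fin.last (n + 1)) = Fin.last (n + 1) := by simp [ext1]

/-- The doubling map `Bool × Perm (Fin (n+1)) → Perm (Fin (n+2))`. -/
def Psi {n : ℕ} (b : Bool) (σ : Equiv.Perm (Fin (n + 1))) : Equiv.Perm (Fin (n + 2)) :=
  ((finRotate (n + 2)).symm.trans (ext1 σ)).trans
    (if b then Equiv.refl _ else Equiv.swap ((Fin.last n).castSucc) (Fin.last (n + 1)))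

lemma finRotate_symm_zero {n : ℕ} : (finRotate (n + 2)).symm 0 = Fin.last (n + 1) := by
  simp [Equiv.symm_apply_eq, -finRotate_symm_apply]

lemma finRotate_symm_succ {n : ℕ} (i : Fin (n + 1)) :
    (finRotate (n + 2)).symm i.succ = i.castSucc := by
  simp [Equiv.symm_apply_eq, -finRotate_symm_apply]

lemma Psi_zero {n : ℕ} (b : Bool) (σ : Equiv.Perm (Fin (n + 1))) :
    Psi b σ 0 = if b then Fin.last (n + 1) else (Fin.last n).castSucc := by
  have hwL : (Fin.last n).castSucc ≠ Fin.last (n + 1) := by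
    simp [Fin.ext_iff]
  cases b <;>
    simp [Psi, finRotate_symm_zero, ext1_last, Equiv.swap_apply_right, hwL, -finRotate_symm_apply]

lemma Psi_succ {n : ℕ} (b : Bool) (σ : Equiv.Perm (Fin (n + 1))) (i : Fin (n + 1)) :
    Psi b σ i.succ =
      (if b then Equiv.refl _ else Equiv.swap ((Fin.last n).castSucc) (Fin.last (n + 1)))
        ((σ i).castSucc) := by
  cases b <;> simp [Psi, finRotate_symm_succ, ext1_castSucc, -finRotate_symm_apply]

lemma swap_castSucc {n : ℕ} (v : Fin (n + 1)) :
    Equiv.swap ((Fin.last n).castSucc) (Fin.last (n + 1)) v.castSucc =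
      if v = Fin.last n then Fin.last (n + 1) else v.castSucc := by
  by_cases hv : v = Fin.last n
  · subst hv; simp [Equiv.swap_apply_left]
  · rw [if_neg hv]
    apply Equiv.swap_apply_of_ne_of_ne
    · exact fun he => hv (Fin.castSucc_injective _ he)
    · exact (Fin.castSucc_lt_last v).ne

lemma Psi_succ_val_ge {n : ℕ} (b : Bool) (σ : Equiv.Perm (Fin (n + 1))) (i : Fin (n + 1)) :
    (σ i : ℕ) ≤ (Psi b σ i.succ : ℕ) := by
  rw [Psi_succ]
  cases b
  · simp only [Bool.false_eq_true, if_false, swap_castSucc]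
    by_cases hv : σ i = Fin.last n
    · rw [if_pos hv, hv]
      simp [Fin.last]
    · rw [if_neg hv]; simp
  · simp

lemma Psi_mem {n : ℕ} (b : Bool) (σ : Equiv.Perm (Fin (n + 1))) (hσ : σ ∈ Sset (n + 1)) :
    Psi b σ ∈ Sset (n + 2) := by
  rw [Sset, Finset.mem_filter] at hσ ⊢
  refine ⟨Finset.mem_univ _, ?_⟩
  intro x
  induction x using Fin.cases with
  | zero =>
    rw [Psi_zero]
    cases b <;> simp [Fin.last]
  | succ i =>
    have h1 := Psi_succ_val_ge b σ i
    have h2 := hσ.2 i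
    have h3 : (i.succ : ℕ) = (i : ℕ) + 1 := rfl
    omega

lemma Psi_inj {n : ℕ} (b b' : Bool) (σ σ' : Equiv.Perm (Fin (n + 1)))
    (h : Psi b σ = Psi b' σ') : b = b' ∧ σ = σ' := by
  have hwL : ((Fin.last n).castSucc : Fin (n + 2)) ≠ Fin.last (n + 1) := by
    simp [Fin.ext_iff]
  have h0 : Psi b σ 0 = Psi b' σ' 0 := by rw [h]
  rw [Psi_zero, Psi_zero] at h0
  have hb : b = b' := by
    cases b <;> cases b' <;> simp_all [Fin.ext_iff]
  subst hb
  refine ⟨rfl, ?_⟩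
  apply Equiv.ext
  intro i
  have hs : Psi b σ i.succ = Psi b σ' i.succ := by rw [h]
  rw [Psi_succ, Psi_succ] at hs
  have := (if b then Equiv.refl (Fin (n+2)) else
    Equiv.swap ((Fin.last n).castSucc) (Fin.last (n + 1))).injective hs
  exact Fin.castSucc_injective _ this

lemma build_sigma {n : ℕ} (π s : Equiv.Perm (Fin (n + 2)))
    (h0 : s (π 0) = Fin.last (n + 1)) :
    ∃ σ : Equiv.Perm (Fin (n + 1)), ∀ i : Fin (n + 1), (σ i).castSucc = s (π i.succ) := by
  set ρ : Equiv.Perm (Fin (n + 2)) := (finRotate (n + 2)).trans (π.trans s) with hρdef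
  have hρ_last : ρ (Fin.last (n + 1)) = Fin.last (n + 1) := by
    have hfr : finRotate (n + 2) (Fin.last (n + 1)) = 0 := by
      rw [← finRotate_symm_zero]; simp
    simp only [hρdef, Equiv.trans_apply, hfr]
    exact h0
  set e : Option (Fin (n + 1)) ≃ Option (Fin (n + 1)) :=
    finSuccEquivLast.symm.trans (ρ.trans finSuccEquivLast) with hedef
  have he_none : e none = none := by
    simp [hedef, hρ_last]
  refine ⟨Equiv.removeNone e, ?_⟩
  intro i
  have hρ_succ : ρ i.castSucc = s (π i.succ) := by
    have hfr : finRotate (n + 2) i.castSucc = i.succ := by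
      rw [← finRotate_symm_succ i]; simp
    simp [hρdef, hfr]
  have hne : e (some i) ≠ none := by
    intro hcon
    have := e.injective (hcon.trans he_none.symm)
    simp at this
  obtain ⟨x, hx⟩ := Option.ne_none_iff_exists'.mp hne
  have h1 := Equiv.removeNone_some e ⟨x, hx⟩
  have he : e (some i) = finSuccEquivLast (ρ i.castSucc) := by
    simp [hedef]
  rw [he] at h1
  have h2 := congrArg finSuccEquivLast.symm h1
  simp only [Equiv.symm_apply_apply, finSuccEquivLast_symm_some] at h2
  rw [h2, hρ_succ]

lemma Psi_surj {n : ℕ} (π : Equiv.Perm (Fin (n + 2))) (hπ : π ∈ Sset (n + 2)) :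
    ∃ b σ, σ ∈ Sset (n + 1) ∧ Psi b σ = π := by
  rw [Sset, Finset.mem_filter] at hπ
  have h0 := hπ.2 0
  have h0lt : (π 0 : ℕ) < n + 2 := (π 0).isLt
  have h0' : (π 0 : ℕ) = n ∨ (π 0 : ℕ) = n + 1 := by
    simp only [Fin.val_zero] at h0; omega
  rcases h0' with hv | hv
  · -- π 0 = castSucc (last n), take b = false
    have hπ0 : π 0 = (Fin.last n).castSucc := by
      ext; simpa using hv
    obtain ⟨σ, hσeq⟩ := build_sigma π
      (Equiv.swap ((Fin.last n).castSucc) (Fin.last (n + 1)))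
      (by rw [hπ0, Equiv.swap_apply_left])
    have hval : ∀ i : Fin (n + 1), (σ i : ℕ) = (π i.succ : ℕ) ∨ (σ i : ℕ) = n := by
      intro i
      have h := hσeq i
      by_cases hL : π i.succ = Fin.last (n + 1)
      · right
        rw [hL, Equiv.swap_apply_right] at h
        have := Fin.castSucc_injective _ h
        rw [this]; rfl
      · left
        have hw : π i.succ ≠ (Fin.last n).castSucc := by
          intro hcon
          exact absurd (π.injective (hcon.trans hπ0.symm)) (Fin.succ_ne_zero i)
        rw [Equiv.swap_apply_of_ne_of_ne hw hL] at h
        exact congrArg Fin.val h ▸ rfl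
    refine ⟨false, σ, ?_, ?_⟩
    · rw [Sset, Finset.mem_filter]
      refine ⟨Finset.mem_univ _, fun i => ?_⟩
      rcases hval i with hvv | hvv
      · have := hπ.2 i.succ
        have h3 : (i.succ : ℕ) = (i : ℕ) + 1 := rfl
        omega
      · omega
    · apply Equiv.ext
      intro x
      induction x using Fin.cases with
      | zero => rw [Psi_zero, hπ0]; simp
      | succ i =>
        rw [Psi_succ]
        simp only [Bool.false_eq_true, if_false]
        rw [hσeq i, Equiv.swap_apply_self]
  · -- π 0 = last, take b = true
    have hπ0 : π 0 = Fin.last (n + 1) := by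
      ext; simpa using hv
    obtain ⟨σ, hσeq⟩ := build_sigma π (Equiv.refl _) (by simpa using hπ0)
    simp only [Equiv.refl_apply] at hσeq
    refine ⟨true, σ, ?_, ?_⟩
    · rw [Sset, Finset.mem_filter]
      refine ⟨Finset.mem_univ _, fun i => ?_⟩
      have hvv : (σ i : ℕ) = (π i.succ : ℕ) := congrArg Fin.val (hσeq i) ▸ rfl
      have := hπ.2 i.succ
      have h3 : (i.succ : ℕ) = (i : ℕ) + 1 := rfl
      omega
    · apply Equiv.ext
      intro x
      induction x using Fin.cases with
      | zero => rw [Psi_zero, hπ0]; simp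
      | succ i =>
        rw [Psi_succ]
        simp only [if_true, Equiv.refl_apply]
        exact hσeq i

lemma Sset_card_rec (n : ℕ) : (Sset (n + 2)).card = 2 * (Sset (n + 1)).card := by
  have : 2 * (Sset (n + 1)).card = ((Finset.univ : Finset Bool) ×ˢ Sset (n + 1)).card := by
    rw [Finset.card_product]
    simp
  rw [this]
  symm
  apply Finset.card_bij (fun p _ => Psi p.1 p.2)
  · rintro ⟨b, σ⟩ hp
    rw [Finset.mem_product] at hp
    exact Psi_mem b σ hp.2
  · rintro ⟨b, σ⟩ _ ⟨b', σ'⟩ _ h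
    obtain ⟨h1, h2⟩ := Psi_inj b b' σ σ' h
    simp [h1, h2]
  · intro π hπ
    obtain ⟨b, σ, hσ, hΨ⟩ := Psi_surj π hπ
    exact ⟨(b, σ), Finset.mem_product.mpr ⟨Finset.mem_univ _, hσ⟩, hΨ⟩

lemma A_rec (n : ℕ) : A (n + 2) = 2 * A (n + 1) := by
  rw [A_eq_Sset, A_eq_Sset, Sset_card_rec]

lemma A_zero : A 0 = 1 := by decide

lemma A_one : A 1 = 1 := by decide

theorem genfun_no132_0 :
    (1 - 2 * PowerSeries.X) ^ 1 * PowerSeries.mk (fun n => (A n : ℚ)) = 1 - PowerSeries.X := by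
  apply PowerSeries.ext
  intro n
  rw [pow_one, sub_mul, one_mul, mul_assoc, map_sub, map_sub]
  rw [show (2 : PowerSeries ℚ) = PowerSeries.C (2 : ℚ) from (map_ofNat (PowerSeries.C (R := ℚ)) 2).symm,
    PowerSeries.coeff_C_mul]
  match n with
  | 0 =>
    simp [PowerSeries.coeff_mk, A_zero]
  | 1 =>
    rw [PowerSeries.coeff_succ_X_mul]
    simp [PowerSeries.coeff_mk, A_zero, A_one]
    norm_num
  | (n + 2) =>
    rw [PowerSeries.coeff_succ_X_mul]
    simp only [PowerSeries.coeff_mk, PowerSeries.coeff_one, PowerSeries.coeff_X]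
    rw [A_rec n]
    push_cast
    ring_nf
end

section
/- Let B₀(n) denote the number of permutations of length n containing exactly one 132 pattern and no 123 pattern. Then in ℚ[[z]], the generating function G₀(z) = ∑_{n≥0} B₀(n)·zⁿ satisfies (1 - 2z)²·G₀(z) = z³. -/
/-- The number of permutations of length n with exactly one 132 pattern and exactly 0 123 patterns. -/
def B (n : ℕ) : ℕ :=
  (Finset.univ.filter (fun π : Equiv.Perm (Fin n) =>
    count132 π = 1 ∧ count123 π = 0)).card

namespace One132

open Finset Equiv

variable {n : ℕ}

/-- order-aware decomposition: build a permutation of `Fin (n+1)` from its first value `p`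
and the pattern `e` of the rest. -/
def Φ (p : Fin (n + 1)) (e : Equiv.Perm (Fin n)) : Equiv.Perm (Fin (n + 1)) :=
  ((finSuccEquiv n).trans e.optionCongr).trans (finSuccEquiv' p).symm

@[simp] lemma Φ_zero (p : Fin (n + 1)) (e : Equiv.Perm (Fin n)) : Φ p e 0 = p := by
  simp [Φ, finSuccEquiv_zero]

@[simp] lemma Φ_succ (p : Fin (n + 1)) (e : Equiv.Perm (Fin n)) (i : Fin n) :
    Φ p e i.succ = p.succAbove (e i) := by
  simp [Φ, finSuccEquiv_succ, finSuccEquiv'_symm_some]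

/-- cross 132 pairs -/
def cr132 (p : Fin (n + 1)) (e : Equiv.Perm (Fin n)) : Finset (Fin n × Fin n) :=
  Finset.univ.filter (fun q => q.1 < q.2 ∧ p ≤ (e q.2).castSucc ∧ e q.2 < e q.1)

/-- cross 123 pairs -/
def cr123 (p : Fin (n + 1)) (e : Equiv.Perm (Fin n)) : Finset (Fin n × Fin n) :=
  Finset.univ.filter (fun q => q.1 < q.2 ∧ p ≤ (e q.1).castSucc ∧ e q.1 < e q.2)

lemma split132 (p : Fin (n + 1)) (e : Equiv.Perm (Fin n)) :
    count132 (Φ p e) = (cr132 p e).card + count132 e := by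
  classical
  rw [count132]
  have hset : (Finset.univ.filter (fun t : Fin (n+1) × Fin (n+1) × Fin (n+1) =>
      t.1 < t.2.1 ∧ t.2.1 < t.2.2 ∧ Φ p e t.1 < Φ p e t.2.2 ∧ Φ p e t.2.2 < Φ p e t.2.1))
      = (cr132 p e).image (fun q => ((0 : Fin (n+1)), q.1.succ, q.2.succ)) ∪
        (Finset.univ.filter (fun t : Fin n × Fin n × Fin n =>
          t.1 < t.2.1 ∧ t.2.1 < t.2.2 ∧ e t.1 < e t.2.2 ∧ e t.2.2 < e t.2.1)).image
          (fun t => (t.1.succ, t.2.1.succ, t.2.2.succ)) := by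
    ext ⟨a, b, c⟩
    simp only [mem_filter, mem_univ, true_and, mem_union, mem_image, cr132, Prod.mk.injEq,
      Prod.exists]
    constructor
    · rintro ⟨hab, hbc, h1, h2⟩
      induction a using Fin.cases with
      | zero =>
        induction b using Fin.cases with
        | zero => exact absurd hab (lt_irrefl _)
        | succ b' =>
          induction c using Fin.cases with
          | zero => exact absurd (hab.trans hbc) (Fin.not_lt_zero _)
          | succ c' =>
            left
            refine ⟨b', c', ⟨Fin.succ_lt_succ_iff.mp hbc, ?_, ?_⟩, rfl, rfl, rfl⟩
            · simp only [Φ_zero, Φ_succ] at h1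
              exact (Fin.lt_succAbove_iff_le_castSucc _ _).mp h1
            · simp only [Φ_succ] at h2
              exact Fin.succAbove_lt_succAbove_iff.mp h2
      | succ a' =>
        induction b using Fin.cases with
        | zero => exact absurd hab (Fin.not_lt_zero _)
        | succ b' =>
          induction c using Fin.cases with
          | zero => exact absurd hbc (Fin.not_lt_zero _)
          | succ c' =>
            right
            simp only [Φ_succ] at h1 h2
            exact ⟨a', b', c', ⟨Fin.succ_lt_succ_iff.mp hab, Fin.succ_lt_succ_iff.mp hbc,
              Fin.succAbove_lt_succAbove_iff.mp h1, Fin.succAbove_lt_succAbove_iff.mp h2⟩,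
              rfl, rfl, rfl⟩
    · rintro (⟨b', c', ⟨hbc, h1, h2⟩, rfl, rfl, rfl⟩ | ⟨a', b', c', ⟨hab, hbc, h1, h2⟩, rfl, rfl, rfl⟩)
      · refine ⟨Fin.succ_pos _, Fin.succ_lt_succ_iff.mpr hbc, ?_, ?_⟩
        · simp only [Φ_zero, Φ_succ]
          exact (Fin.lt_succAbove_iff_le_castSucc _ _).mpr h1
        · simp only [Φ_succ]
          exact Fin.succAbove_lt_succAbove_iff.mpr h2
      · exact ⟨Fin.succ_lt_succ_iff.mpr hab, Fin.succ_lt_succ_iff.mpr hbc,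
          by simp only [Φ_succ]; exact Fin.succAbove_lt_succAbove_iff.mpr h1,
          by simp only [Φ_succ]; exact Fin.succAbove_lt_succAbove_iff.mpr h2⟩
  rw [hset, card_union_of_disjoint, card_image_of_injective, card_image_of_injective, count132]
  · intro t t' h
    simp only [Prod.mk.injEq] at h
    exact Prod.ext (Fin.succ_injective _ h.1) (Prod.ext (Fin.succ_injective _ h.2.1)
      (Fin.succ_injective _ h.2.2))
  · intro q q' h
    simp only [Prod.mk.injEq, true_and] at h
    exact Prod.ext (Fin.succ_injective _ h.1) (Fin.succ_injective _ h.2)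
  · rw [Finset.disjoint_left]
    rintro ⟨a, b, c⟩ h1 h2
    simp only [mem_image, Prod.mk.injEq, Prod.exists] at h1 h2
    obtain ⟨_, _, _, ha, _, _⟩ := h1
    obtain ⟨a', _, _, _, ha', _, _⟩ := h2
    exact Fin.succ_ne_zero a' (ha'.trans ha.symm)

lemma split123 (p : Fin (n + 1)) (e : Equiv.Perm (Fin n)) :
    count123 (Φ p e) = (cr123 p e).card + count123 e := by
  classical
  rw [count123]
  have hset : (Finset.univ.filter (fun t : Fin (n+1) × Fin (n+1) × Fin (n+1) =>
      t.1 < t.2.1 ∧ t.2.1 < t.2.2 ∧ Φ p e t.1 < Φ p e t.2.1 ∧ Φ p e t.2.1 < Φ p e t.2.2))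
      = (cr123 p e).image (fun q => ((0 : Fin (n+1)), q.1.succ, q.2.succ)) ∪
        (Finset.univ.filter (fun t : Fin n × Fin n × Fin n =>
          t.1 < t.2.1 ∧ t.2.1 < t.2.2 ∧ e t.1 < e t.2.1 ∧ e t.2.1 < e t.2.2)).image
          (fun t => (t.1.succ, t.2.1.succ, t.2.2.succ)) := by
    ext ⟨a, b, c⟩
    simp only [mem_filter, mem_univ, true_and, mem_union, mem_image, cr123, Prod.mk.injEq,
      Prod.exists]
    constructor
    · rintro ⟨hab, hbc, h1, h2⟩
      induction a using Fin.cases with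
      | zero =>
        induction b using Fin.cases with
        | zero => exact absurd hab (lt_irrefl _)
        | succ b' =>
          induction c using Fin.cases with
          | zero => exact absurd (hab.trans hbc) (Fin.not_lt_zero _)
          | succ c' =>
            left
            simp only [Φ_zero, Φ_succ] at h1 h2
            exact ⟨b', c', ⟨Fin.succ_lt_succ_iff.mp hbc,
              (Fin.lt_succAbove_iff_le_castSucc _ _).mp h1,
              Fin.succAbove_lt_succAbove_iff.mp h2⟩, rfl, rfl, rfl⟩
      | succ a' =>
        induction b using Fin.cases with
        | zero => exact absurd hab (Fin.not_lt_zero _)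
        | succ b' =>
          induction c using Fin.cases with
          | zero => exact absurd hbc (Fin.not_lt_zero _)
          | succ c' =>
            right
            simp only [Φ_succ] at h1 h2
            exact ⟨a', b', c', ⟨Fin.succ_lt_succ_iff.mp hab, Fin.succ_lt_succ_iff.mp hbc,
              Fin.succAbove_lt_succAbove_iff.mp h1, Fin.succAbove_lt_succAbove_iff.mp h2⟩,
              rfl, rfl, rfl⟩
    · rintro (⟨b', c', ⟨hbc, h1, h2⟩, rfl, rfl, rfl⟩ | ⟨a', b', c', ⟨hab, hbc, h1, h2⟩, rfl, rfl, rfl⟩)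
      · refine ⟨Fin.succ_pos _, Fin.succ_lt_succ_iff.mpr hbc, ?_, ?_⟩
        · simp only [Φ_zero, Φ_succ]
          exact (Fin.lt_succAbove_iff_le_castSucc _ _).mpr h1
        · simp only [Φ_succ]
          exact Fin.succAbove_lt_succAbove_iff.mpr h2
      · exact ⟨Fin.succ_lt_succ_iff.mpr hab, Fin.succ_lt_succ_iff.mpr hbc,
          by simp only [Φ_succ]; exact Fin.succAbove_lt_succAbove_iff.mpr h1,
          by simp only [Φ_succ]; exact Fin.succAbove_lt_succAbove_iff.mpr h2⟩
  rw [hset, card_union_of_disjoint, card_image_of_injective, card_image_of_injective, count123]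
  · intro t t' h
    simp only [Prod.mk.injEq] at h
    exact Prod.ext (Fin.succ_injective _ h.1) (Prod.ext (Fin.succ_injective _ h.2.1)
      (Fin.succ_injective _ h.2.2))
  · intro q q' h
    simp only [Prod.mk.injEq, true_and] at h
    exact Prod.ext (Fin.succ_injective _ h.1) (Fin.succ_injective _ h.2)
  · rw [Finset.disjoint_left]
    rintro ⟨a, b, c⟩ h1 h2
    simp only [mem_image, Prod.mk.injEq, Prod.exists] at h1 h2
    obtain ⟨_, _, _, ha, _, _⟩ := h1
    obtain ⟨a', _, _, _, ha', _, _⟩ := h2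
    exact Fin.succ_ne_zero a' (ha'.trans ha.symm)

lemma cr132_empty {p : Fin (n + 1)} (e : Equiv.Perm (Fin n)) (h : n ≤ (p : ℕ) + 1) :
    cr132 p e = ∅ := by
  rw [cr132, Finset.filter_eq_empty_iff]
  rintro q - ⟨-, h1, h2⟩
  have b1 : (p : ℕ) ≤ (e q.2 : ℕ) := by simpa [Fin.le_def] using h1
  have b2 : (e q.2 : ℕ) < (e q.1 : ℕ) := h2
  have b3 : (e q.1 : ℕ) < n := (e q.1).isLt
  omega

lemma cr123_empty {p : Fin (n + 1)} (e : Equiv.Perm (Fin n)) (h : n ≤ (p : ℕ) + 1) :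
    cr123 p e = ∅ := by
  rw [cr123, Finset.filter_eq_empty_iff]
  rintro q - ⟨-, h1, h2⟩
  have b1 : (p : ℕ) ≤ (e q.1 : ℕ) := by simpa [Fin.le_def] using h1
  have b2 : (e q.1 : ℕ) < (e q.2 : ℕ) := h2
  have b3 : (e q.2 : ℕ) < n := (e q.2).isLt
  omega

/-- given two distinct positions with values ≥ p, the ordered pair is a cross pattern -/
lemma pair_mem {p : Fin (n + 1)} {e : Equiv.Perm (Fin n)} {u v : Fin n} (huv : u < v)
    (hu : (p : ℕ) ≤ (e u : ℕ)) (hv : (p : ℕ) ≤ (e v : ℕ)) :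
    (u, v) ∈ cr132 p e ∪ cr123 p e := by
  rcases lt_or_gt_of_ne (fun h : e u = e v => huv.ne (e.injective h)) with h | h
  · exact Finset.mem_union_right _ (by
      simp only [cr123, mem_filter, mem_univ, true_and]
      exact ⟨huv, by simpa [Fin.le_def] using hu, h⟩)
  · exact Finset.mem_union_left _ (by
      simp only [cr132, mem_filter, mem_univ, true_and]
      exact ⟨huv, by simpa [Fin.le_def] using hv, h⟩)

lemma cr_card_union (p : Fin (n + 1)) (e : Equiv.Perm (Fin n)) :
    (cr132 p e ∪ cr123 p e).card = (cr132 p e).card + (cr123 p e).card := by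
  rw [card_union_of_disjoint]
  rw [Finset.disjoint_left]
  rintro q h1 h2
  simp only [cr132, cr123, mem_filter] at h1 h2
  exact absurd (h1.2.2.2.trans h2.2.2.2) (lt_irrefl _)

/-- ordered pair -/
def op (u v : Fin n) : Fin n × Fin n := if u < v then (u, v) else (v, u)

lemma op_mem {p : Fin (n + 1)} {e : Equiv.Perm (Fin n)} {u v : Fin n} (huv : u ≠ v)
    (hu : (p : ℕ) ≤ (e u : ℕ)) (hv : (p : ℕ) ≤ (e v : ℕ)) :
    op u v ∈ cr132 p e ∪ cr123 p e := by
  rcases huv.lt_or_gt with h | h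
  · rw [op, if_pos h]; exact pair_mem h hu hv
  · rw [op, if_neg (not_lt.mpr h.le)]; exact pair_mem h hv hu

lemma one_le_cr {p : Fin (n + 1)} (e : Equiv.Perm (Fin n)) (h : (p : ℕ) + 2 ≤ n) :
    1 ≤ (cr132 p e).card + (cr123 p e).card := by
  obtain ⟨v1, hv1⟩ : ∃ v : Fin n, (v : ℕ) = n - 1 := ⟨⟨n - 1, by omega⟩, rfl⟩
  obtain ⟨v2, hv2⟩ : ∃ v : Fin n, (v : ℕ) = n - 2 := ⟨⟨n - 2, by omega⟩, rfl⟩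
  have huv : e.symm v1 ≠ e.symm v2 := by
    intro hh
    have := congrArg e hh
    rw [Equiv.apply_symm_apply, Equiv.apply_symm_apply] at this
    rw [Fin.ext_iff, hv1, hv2] at this
    omega
  have hm := op_mem (p := p) huv (by rw [Equiv.apply_symm_apply, hv1]; omega)
    (by rw [Equiv.apply_symm_apply, hv2]; omega)
  rw [← cr_card_union]
  exact Finset.card_pos.mpr ⟨_, hm⟩

lemma two_le_cr {p : Fin (n + 1)} (e : Equiv.Perm (Fin n)) (h : (p : ℕ) + 3 ≤ n) :
    2 ≤ (cr132 p e).card + (cr123 p e).card := by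
  obtain ⟨v1, hv1⟩ : ∃ v : Fin n, (v : ℕ) = n - 1 := ⟨⟨n - 1, by omega⟩, rfl⟩
  obtain ⟨v2, hv2⟩ : ∃ v : Fin n, (v : ℕ) = n - 2 := ⟨⟨n - 2, by omega⟩, rfl⟩
  obtain ⟨v3, hv3⟩ : ∃ v : Fin n, (v : ℕ) = n - 3 := ⟨⟨n - 3, by omega⟩, rfl⟩
  have key : ∀ a b : Fin n, (a : ℕ) ≠ (b : ℕ) → e.symm a ≠ e.symm b := by
    intro a b hab hh
    have := congrArg e hh
    rw [Equiv.apply_symm_apply, Equiv.apply_symm_apply] at this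
    exact hab (by rw [this])
  set u := e.symm v1 with hu
  set v := e.symm v2 with hv
  set w := e.symm v3 with hw
  have huv : u ≠ v := key _ _ (by omega)
  have huw : u ≠ w := key _ _ (by omega)
  have hvw : v ≠ w := key _ _ (by omega)
  have hmu : (p : ℕ) ≤ (e u : ℕ) := by rw [hu, Equiv.apply_symm_apply, hv1]; omega
  have hmv : (p : ℕ) ≤ (e v : ℕ) := by rw [hv, Equiv.apply_symm_apply, hv2]; omega
  have hmw : (p : ℕ) ≤ (e w : ℕ) := by rw [hw, Equiv.apply_symm_apply, hv3]; omega
  have h1 := op_mem (p := p) huv hmu hmv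
  have h2 := op_mem (p := p) huw hmu hmw
  have hne : op u v ≠ op u w := by
    unfold op
    split_ifs with ha hb hb <;> simp only [ne_eq, Prod.mk.injEq, not_and]
    · exact fun _ hh => hvw hh
    · exact fun hh _ => huw hh
    · exact fun hh _ => huv hh.symm
    · exact fun hh _ => hvw hh
  have hsub : {op u v, op u w} ⊆ cr132 p e ∪ cr123 p e :=
    Finset.insert_subset h1 (Finset.singleton_subset_iff.mpr h2)
  calc 2 = ({op u v, op u w} : Finset (Fin n × Fin n)).card := (Finset.card_pair hne).symm
    _ ≤ (cr132 p e ∪ cr123 p e).card := Finset.card_le_card hsub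
    _ = _ := cr_card_union p e

lemma avoid_iff (p : Fin (n + 1)) (e : Equiv.Perm (Fin n)) :
    (count132 (Φ p e) = 0 ∧ count123 (Φ p e) = 0) ↔
      (n ≤ (p : ℕ) + 1 ∧ (count132 e = 0 ∧ count123 e = 0)) := by
  rw [split132, split123]
  constructor
  · rintro ⟨h1, h2⟩
    have hp : n ≤ (p : ℕ) + 1 := by
      by_contra hc
      have := one_le_cr e (p := p) (by omega)
      omega
    exact ⟨hp, by omega, by omega⟩
  · rintro ⟨hp, h1, h2⟩
    rw [cr132_empty e hp, cr123_empty e hp]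
    simp [h1, h2]

lemma max_iff (p : Fin (n + 1)) (e : Equiv.Perm (Fin n)) :
    (∀ i, Φ p e i ≤ Φ p e 0) ↔ p = Fin.last n := by
  simp only [Φ_zero]
  constructor
  · intro h
    have h2 := h ((Φ p e).symm (Fin.last n))
    rw [Equiv.apply_symm_apply] at h2
    exact le_antisymm (Fin.le_last p) h2
  · rintro rfl i
    exact Fin.le_last _

lemma B_iff [NeZero n] (p : Fin (n + 1)) (e : Equiv.Perm (Fin n)) :
    (count132 (Φ p e) = 1 ∧ count123 (Φ p e) = 0) ↔
      ((n ≤ (p : ℕ) + 1) ∧ (count132 e = 1 ∧ count123 e = 0)) ∨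
      (((p : ℕ) + 2 = n) ∧ ((count132 e = 0 ∧ count123 e = 0) ∧ ∀ i, e i ≤ e 0)) := by
  rw [split132, split123]
  constructor
  · rintro ⟨h1, h2⟩
    rcases le_or_gt n ((p : ℕ) + 1) with hp | hp
    · left
      rw [cr132_empty e hp] at h1
      rw [cr123_empty e hp] at h2
      simp only [Finset.card_empty, Nat.zero_add] at h1 h2
      exact ⟨hp, h1, h2⟩
    · right
      have hn2 : (p : ℕ) + 2 ≤ n := hp
      have hnot3 : ¬ ((p : ℕ) + 3 ≤ n) := by
        intro hc
        have := two_le_cr e (p := p) hc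
        omega
      have hpn : (p : ℕ) + 2 = n := by omega
      have h1le := one_le_cr e (p := p) hn2
      have hc123 : (cr123 p e).card = 0 ∧ count123 e = 0 := by omega
      have hc132 : (cr132 p e).card = 1 ∧ count132 e = 0 := by omega
      refine ⟨hpn, ⟨hc132.2, hc123.2⟩, ?_⟩
      obtain ⟨v1, hv1⟩ : ∃ v : Fin n, (v : ℕ) = n - 1 := ⟨⟨n - 1, by omega⟩, rfl⟩
      obtain ⟨v2, hv2⟩ : ∃ v : Fin n, (v : ℕ) = n - 2 := ⟨⟨n - 2, by omega⟩, rfl⟩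
      set y := e.symm v1 with hy
      set z := e.symm v2 with hz
      have hey : e y = v1 := e.apply_symm_apply v1
      have hez : e z = v2 := e.apply_symm_apply v2
      have hyz : y ≠ z := by
        intro hh
        rw [hh, hez] at hey
        rw [Fin.ext_iff, hv1, hv2] at hey
        omega
      have hy0 : y = 0 := by
        by_contra hyne
        have hzy : ¬ z < y := by
          intro hzy
          have hmem : (z, y) ∈ cr123 p e := by
            simp only [cr123, mem_filter, mem_univ, true_and]
            refine ⟨hzy, ?_, ?_⟩
            · rw [Fin.le_def, Fin.coe_castSucc, hez, hv2]; omega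
            · rw [Fin.lt_def, hey, hez, hv1, hv2]; omega
          have := Finset.card_pos.mpr ⟨_, hmem⟩
          omega
        have hylt : y < z := hyz.lt_or_gt.resolve_right hzy
        have h0y : (0 : Fin n) < y := (Fin.pos_iff_ne_zero' y).mpr hyne
        have hz0 : z ≠ 0 := by
          intro hh
          rw [hh] at hylt
          exact (Fin.zero_le _).not_gt hylt
        have he0a : (e 0 : ℕ) ≠ n - 1 := by
          intro hh
          have : e 0 = v1 := Fin.ext (by rw [hh, hv1])
          exact hyne (e.injective (this.trans hey.symm)).symm
        have he0b : (e 0 : ℕ) ≠ n - 2 := by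
          intro hh
          have : e 0 = v2 := Fin.ext (by rw [hh, hv2])
          exact hz0 (e.injective (hez.trans this.symm))
        have he0 : (e 0 : ℕ) < n - 2 := by
          have := (e 0).isLt
          omega
        have hmem : ((0 : Fin n), y, z) ∈ (Finset.univ.filter
            (fun t : Fin n × Fin n × Fin n =>
              t.1 < t.2.1 ∧ t.2.1 < t.2.2 ∧ e t.1 < e t.2.2 ∧ e t.2.2 < e t.2.1)) := by
          simp only [mem_filter, mem_univ, true_and]
          refine ⟨h0y, hylt, ?_, ?_⟩
          · rw [Fin.lt_def, hez, hv2]; omega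
          · rw [Fin.lt_def, hey, hez, hv1, hv2]; omega
        have : 0 < count132 e := Finset.card_pos.mpr ⟨_, hmem⟩
        omega
      intro i
      rw [← hy0, hey, Fin.le_def, hv1]
      have := (e i).isLt
      omega
  · rintro (⟨hp, h1, h2⟩ | ⟨hpn, ⟨h1, h2⟩, hmax⟩)
    · rw [cr132_empty e hp, cr123_empty e hp]
      simp [h1, h2]
    · have hn : 2 ≤ n := by omega
      obtain ⟨v1, hv1⟩ : ∃ v : Fin n, (v : ℕ) = n - 1 := ⟨⟨n - 1, by omega⟩, rfl⟩
      obtain ⟨v2, hv2⟩ : ∃ v : Fin n, (v : ℕ) = n - 2 := ⟨⟨n - 2, by omega⟩, rfl⟩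
      have he0 : e 0 = v1 := by
        have h' := hmax (e.symm v1)
        rw [Equiv.apply_symm_apply] at h'
        refine le_antisymm ?_ h'
        rw [Fin.le_def, hv1]
        have := (e 0).isLt
        omega
      set z := e.symm v2 with hzdef
      have hez : e z = v2 := e.apply_symm_apply v2
      have hz0 : z ≠ 0 := by
        intro hh
        rw [hh, he0] at hez
        rw [Fin.ext_iff, hv1, hv2] at hez
        omega
      have hset132 : cr132 p e = {((0 : Fin n), z)} := by
        ext ⟨a, b⟩
        simp only [cr132, mem_filter, mem_univ, true_and, Finset.mem_singleton, Prod.mk.injEq]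
        constructor
        · rintro ⟨hab, hb, hba⟩
          have h1' : (p : ℕ) ≤ (e b : ℕ) := by
            rw [Fin.le_def, Fin.coe_castSucc] at hb; exact hb
          have h2' : (e b : ℕ) < (e a : ℕ) := hba
          have h3' : (e a : ℕ) < n := (e a).isLt
          have hea : e a = v1 := Fin.ext (by rw [hv1]; omega)
          have heb : e b = v2 := Fin.ext (by rw [hv2]; omega)
          exact ⟨e.injective (hea.trans he0.symm), e.injective (heb.trans hez.symm)⟩
        · rintro ⟨rfl, rfl⟩
          refine ⟨(Fin.pos_iff_ne_zero' z).mpr hz0, ?_, ?_⟩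
          · rw [Fin.le_def, Fin.coe_castSucc, hez, hv2]; omega
          · rw [Fin.lt_def, hez, he0, hv1, hv2]; omega
      have hset123 : cr123 p e = ∅ := by
        rw [cr123, Finset.filter_eq_empty_iff]
        rintro ⟨a, b⟩ -
        rintro ⟨hab, ha, hba⟩
        have h1' : (p : ℕ) ≤ (e a : ℕ) := by
          rw [Fin.le_def, Fin.coe_castSucc] at ha; exact ha
        have h2' : (e a : ℕ) < (e b : ℕ) := hba
        have h3' : (e b : ℕ) < n := (e b).isLt
        have heb : e b = v1 := Fin.ext (by rw [hv1]; omega)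
        have hb0 : b = 0 := e.injective (heb.trans he0.symm)
        rw [hb0] at hab
        exact (Fin.zero_le _).not_gt hab
      rw [hset132, hset123]
      simp [h1, h2]

lemma Φ_bijective :
    Function.Bijective (fun pe : Fin (n + 1) × Equiv.Perm (Fin n) => Φ pe.1 pe.2) := by
  rw [Fintype.bijective_iff_injective_and_card]
  constructor
  · rintro ⟨p, e⟩ ⟨q, f⟩ h
    simp only at h
    have hpq : p = q := by
      have := congrFun (congrArg (fun π : Equiv.Perm (Fin (n+1)) => (π : Fin (n+1) → Fin (n+1))) h) 0
      simpa using this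
    subst hpq
    have hef : e = f := by
      apply Equiv.ext
      intro i
      have := congrFun (congrArg (fun π : Equiv.Perm (Fin (n+1)) => (π : Fin (n+1) → Fin (n+1))) h) i.succ
      simp only [Φ_succ] at this
      exact Fin.succAbove_right_injective this
    rw [hef]
  · simp [Fintype.card_perm, Nat.factorial_succ]

lemma transfer (P : Equiv.Perm (Fin (n + 1)) → Prop) [DecidablePred P] :
    (Finset.univ.filter P).card =
      (Finset.univ.filter fun pe : Fin (n + 1) × Equiv.Perm (Fin n) => P (Φ pe.1 pe.2)).card := by
  symm
  apply Finset.card_nbij (fun pe => Φ pe.1 pe.2)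
  · intro pe h
    simp only [mem_filter, mem_univ, true_and] at h ⊢
    simpa using h
  · exact fun a _ b _ h => Φ_bijective.1 h
  · intro π hπ
    obtain ⟨pe, rfl⟩ := Φ_bijective.2 π
    simp only [Finset.coe_filter, mem_univ, true_and, Set.mem_setOf_eq] at hπ
    exact ⟨pe, by simp [hπ], rfl⟩

/-- number of permutations avoiding both 123 and 132 -/
def Tc (n : ℕ) : ℕ :=
  (Finset.univ.filter fun e : Equiv.Perm (Fin n) => count132 e = 0 ∧ count123 e = 0).card

/-- number of avoiders of length n+1 with maximal first value -/
def T0 (n : ℕ) : ℕ :=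
  (Finset.univ.filter fun e : Equiv.Perm (Fin (n + 1)) =>
    (count132 e = 0 ∧ count123 e = 0) ∧ ∀ i, e i ≤ e 0).card

lemma count_zero_of_le_two (h : n ≤ 2) (e : Equiv.Perm (Fin n)) :
    count132 e = 0 ∧ count123 e = 0 := by
  constructor
  · rw [count132, Finset.card_eq_zero, Finset.filter_eq_empty_iff]
    rintro ⟨a, b, c⟩ - ⟨h1, h2, -⟩
    have := a.isLt
    have := c.isLt
    have h1' : (a : ℕ) < (b : ℕ) := h1
    have h2' : (b : ℕ) < (c : ℕ) := h2
    omega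
  · rw [count123, Finset.card_eq_zero, Finset.filter_eq_empty_iff]
    rintro ⟨a, b, c⟩ - ⟨h1, h2, -⟩
    have := a.isLt
    have := c.isLt
    have h1' : (a : ℕ) < (b : ℕ) := h1
    have h2' : (b : ℕ) < (c : ℕ) := h2
    omega

lemma Tc_zero : Tc 0 = 1 := by
  rw [Tc]
  rw [Finset.filter_true_of_mem (fun e _ => count_zero_of_le_two (by omega) e)]
  simp [Fintype.card_perm]

lemma Tc_one : Tc 1 = 1 := by
  rw [Tc]
  rw [Finset.filter_true_of_mem (fun e _ => count_zero_of_le_two (by omega) e)]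
  simp [Fintype.card_perm]

lemma card_p_two (n : ℕ) :
    (Finset.univ.filter fun p : Fin (n + 2) => n + 1 ≤ (p : ℕ) + 1).card = 2 := by
  have : (Finset.univ.filter fun p : Fin (n + 2) => n + 1 ≤ (p : ℕ) + 1) =
      {⟨n, by omega⟩, ⟨n + 1, by omega⟩} := by
    ext p
    simp only [mem_filter, mem_univ, true_and, Finset.mem_insert, Finset.mem_singleton,
      Fin.ext_iff]
    have := p.isLt
    omega
  rw [this]
  exact Finset.card_pair (by simp [Fin.ext_iff])

lemma card_p_one (n : ℕ) :
    (Finset.univ.filter fun p : Fin (n + 2) => (p : ℕ) + 2 = n + 1).card =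
      if 1 ≤ n then 1 else 0 := by
  rcases n with _ | m
  · rw [if_neg (by omega : ¬ (1 ≤ 0)), Finset.card_eq_zero, Finset.filter_eq_empty_iff]
    rintro p -
    have := p.isLt
    omega
  · rw [if_pos (by omega : 1 ≤ m + 1)]
    have : (Finset.univ.filter fun p : Fin (m + 1 + 2) => (p : ℕ) + 2 = m + 1 + 1) =
        {⟨m, by omega⟩} := by
      ext p
      simp only [mem_filter, mem_univ, true_and, Finset.mem_singleton, Fin.ext_iff]
      omega
    rw [this, Finset.card_singleton]

lemma Tc_succ (n : ℕ) : Tc (n + 2) = 2 * Tc (n + 1) := by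
  rw [Tc, transfer]
  have : (Finset.univ.filter fun pe : Fin (n + 2) × Equiv.Perm (Fin (n + 1)) =>
      count132 (Φ pe.1 pe.2) = 0 ∧ count123 (Φ pe.1 pe.2) = 0) =
      (Finset.univ.filter fun p : Fin (n + 2) => n + 1 ≤ (p : ℕ) + 1) ×ˢ
      (Finset.univ.filter fun e : Equiv.Perm (Fin (n + 1)) =>
        count132 e = 0 ∧ count123 e = 0) := by
    rw [← Finset.filter_product, Finset.univ_product_univ]
    apply Finset.filter_congr
    rintro pe -
    exact avoid_iff pe.1 pe.2
  rw [this, Finset.card_product, card_p_two, Tc]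

lemma T0_eq_Tc (n : ℕ) : T0 n = Tc n := by
  rw [T0, transfer, Tc]
  have : (Finset.univ.filter fun pe : Fin (n + 1) × Equiv.Perm (Fin n) =>
      (count132 (Φ pe.1 pe.2) = 0 ∧ count123 (Φ pe.1 pe.2) = 0) ∧
        ∀ i, Φ pe.1 pe.2 i ≤ Φ pe.1 pe.2 0) =
      (Finset.univ.filter fun p : Fin (n + 1) => p = Fin.last n) ×ˢ
      (Finset.univ.filter fun e : Equiv.Perm (Fin n) =>
        count132 e = 0 ∧ count123 e = 0) := by
    rw [← Finset.filter_product, Finset.univ_product_univ]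
    apply Finset.filter_congr
    rintro pe -
    rw [avoid_iff, max_iff]
    constructor
    · rintro ⟨⟨-, h⟩, hl⟩
      exact ⟨hl, h⟩
    · rintro ⟨hl, h⟩
      refine ⟨⟨?_, h⟩, hl⟩
      rw [hl]
      simp
  rw [this, Finset.card_product]
  have : (Finset.univ.filter fun p : Fin (n + 1) => p = Fin.last n).card = 1 := by
    rw [Finset.filter_eq', if_pos (Finset.mem_univ _), Finset.card_singleton]
  rw [this, Nat.one_mul]



lemma B_small (h : n ≤ 2) : B n = 0 := by
  rw [B, Finset.card_eq_zero, Finset.filter_eq_empty_iff]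
  rintro e - ⟨h1, -⟩
  rw [(count_zero_of_le_two h e).1] at h1
  exact absurd h1 (by omega)

lemma B_succ (n : ℕ) : B (n + 2) = 2 * B (n + 1) + (if 1 ≤ n then T0 n else 0) := by
  rw [B, transfer]
  have hsplit : (Finset.univ.filter fun pe : Fin (n + 2) × Equiv.Perm (Fin (n + 1)) =>
      count132 (Φ pe.1 pe.2) = 1 ∧ count123 (Φ pe.1 pe.2) = 0) =
      ((Finset.univ.filter fun p : Fin (n + 2) => n + 1 ≤ (p : ℕ) + 1) ×ˢ
        (Finset.univ.filter fun e : Equiv.Perm (Fin (n + 1)) =>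
          count132 e = 1 ∧ count123 e = 0)) ∪
      ((Finset.univ.filter fun p : Fin (n + 2) => (p : ℕ) + 2 = n + 1) ×ˢ
        (Finset.univ.filter fun e : Equiv.Perm (Fin (n + 1)) =>
          (count132 e = 0 ∧ count123 e = 0) ∧ ∀ i, e i ≤ e 0)) := by
    rw [← Finset.filter_product, ← Finset.filter_product, Finset.univ_product_univ,
      ← Finset.filter_or]
    apply Finset.filter_congr
    rintro pe -
    exact B_iff pe.1 pe.2
  rw [hsplit, Finset.card_union_of_disjoint, Finset.card_product, Finset.card_product,
    card_p_two, card_p_one]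
  · rcases Nat.lt_or_ge n 1 with hn | hn
    · rw [if_neg (by omega), if_neg (by omega)]
      rw [B, Nat.mul_comm]
      omega
    · rw [if_pos hn, if_pos hn, Nat.one_mul]
      rfl
  · rw [Finset.disjoint_left]
    rintro ⟨p, e⟩ h1 h2
    rw [Finset.mem_product] at h1 h2
    have hq1 := h1.1
    have hq2 := h2.1
    simp only [Finset.mem_filter, Finset.mem_univ, true_and] at hq1 hq2
    omega

lemma Tc_pow (n : ℕ) : Tc (n + 1) = 2 ^ n := by
  induction n with
  | zero => exact Tc_one
  | succ m ih => rw [Tc_succ, ih, pow_succ, Nat.mul_comm]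

lemma T0_pow (n : ℕ) : T0 (n + 1) = 2 ^ n := by
  rw [T0_eq_Tc, Tc_pow]

lemma B_closed (n : ℕ) : B (n + 3) = (n + 1) * 2 ^ n := by
  induction n with
  | zero =>
    rw [show (0 : ℕ) + 3 = 1 + 2 from rfl, B_succ, B_small (by omega), if_pos (le_refl 1),
      T0_pow]
    norm_num
  | succ m ih =>
    rw [show m + 1 + 3 = (m + 2) + 2 from rfl, B_succ, if_pos (by omega),
      show m + 2 = (m + 1) + 1 from rfl, T0_pow, show m + 2 + 1 = m + 3 from rfl, ih]
    ring


end One132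

theorem genfun_one132_0 :
    (1 - 2 * PowerSeries.X) ^ 2 * PowerSeries.mk (fun n => (B n : ℚ)) = PowerSeries.X ^ 3 := by
  have hB0 : B 0 = 0 := One132.B_small (by omega)
  have hB1 : B 1 = 0 := One132.B_small (by omega)
  have hB2 : B 2 = 0 := One132.B_small (by omega)
  have hB3 : B 3 = 1 := by have := One132.B_closed 0; simpa using this
  have hB4 : B 4 = 4 := by have := One132.B_closed 1; simpa using this
  have hC : ((PowerSeries.C (R := ℚ)) 4) = (4 : PowerSeries ℚ) := by simp [map_ofNat]
  have hrw : (1 - 2 * PowerSeries.X) ^ 2 * PowerSeries.mk (fun n => (B n : ℚ)) =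
      PowerSeries.mk (fun n => (B n : ℚ))
        - PowerSeries.C (R := ℚ) 4 * (PowerSeries.X * PowerSeries.mk (fun n => (B n : ℚ)))
        + PowerSeries.C (R := ℚ) 4 *
            (PowerSeries.X * (PowerSeries.X * PowerSeries.mk (fun n => (B n : ℚ)))) := by
    rw [hC]; ring
  rw [hrw]
  ext n
  rw [map_add, map_sub, PowerSeries.coeff_C_mul, PowerSeries.coeff_C_mul]
  match n with
  | 0 =>
    simp [PowerSeries.coeff_zero_X_mul, PowerSeries.coeff_X_pow, hB0]
  | 1 =>
    simp [PowerSeries.coeff_succ_X_mul, PowerSeries.coeff_zero_X_mul, PowerSeries.coeff_X_pow,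
      hB0, hB1]
  | 2 =>
    simp [PowerSeries.coeff_succ_X_mul, PowerSeries.coeff_X_pow, hB0, hB1, hB2]
  | 3 =>
    simp [PowerSeries.coeff_succ_X_mul, PowerSeries.coeff_X_pow, hB1, hB2, hB3]
  | 4 =>
    simp [PowerSeries.coeff_succ_X_mul, PowerSeries.coeff_X_pow, hB2, hB3, hB4]
  | (m + 5) =>
    have e1 : B (m + 5) = (m + 3) * 2 ^ (m + 2) := One132.B_closed (m + 2)
    have e2 : B (m + 4) = (m + 2) * 2 ^ (m + 1) := One132.B_closed (m + 1)
    have e3 : B (m + 3) = (m + 1) * 2 ^ m := One132.B_closed m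
    simp only [PowerSeries.coeff_succ_X_mul, PowerSeries.coeff_mk, PowerSeries.coeff_X_pow,
      if_neg (by omega : ¬ (m + 5 = 3)), e1, e2, e3]
    push_cast
    ring
end

section
/- Let n ≥ 1 and let π be a permutation of {0,...,n-1} (π : Equiv.Perm (Fin n)) that contains no 132 pattern, and let k be the position of the maximum, i.e. π(k) = n-1. Then for all indices i, j with i < k < j, we have π(j) < π(i). In particular, the set of values at positions before k is exactly the set of the top k values below the maximum, and the set of values at positions after k is exactly {0,...,n-2-k}. -/
theorem structure_of_132_avoiding (n : ℕ) (hn : 1 ≤ n) (π : Equiv.Perm (Fin n))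
    (havoid : ∀ i₁ i₂ i₃ : Fin n, i₁ < i₂ → i₂ < i₃ →
      ¬(π i₁ < π i₃ ∧ π i₃ < π i₂))
    (k : Fin n) (hk : (π k : ℕ) = n - 1) :
    (∀ i j : Fin n, i < k → k < j → π j < π i) ∧
    (∀ v : Fin n, (∃ i : Fin n, i < k ∧ π i = v) ↔
      n - 1 - (k : ℕ) ≤ (v : ℕ) ∧ (v : ℕ) < n - 1) ∧
    (∀ v : Fin n, (∃ j : Fin n, k < j ∧ π j = v) ↔ (v : ℕ) < n - 1 - (k : ℕ)) := by
  have hmax : ∀ x : Fin n, x ≠ k → π x < π k := by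
    intro x hx
    have h1 : π x ≠ π k := fun h => hx (π.injective h)
    have h2 : (π x : ℕ) ≤ n - 1 := Nat.le_sub_one_of_lt (π x).isLt
    have h3 : (π x : ℕ) < (π k : ℕ) :=
      lt_of_le_of_ne (hk ▸ h2) (fun h => h1 (Fin.ext h))
    exact h3
  have key : ∀ i j : Fin n, i < k → k < j → π j < π i := by
    intro i j hik hkj
    have h := havoid i k j hik hkj
    push_neg at h
    have hjk : π j < π k := hmax j (ne_of_gt hkj)
    have hle : ¬ (π i < π j) := fun hij => absurd (h hij) (not_le.mpr hjk)
    have hne : π j ≠ π i := fun h' => (ne_of_gt (hik.trans hkj)) (π.injective h')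
    exact lt_of_le_of_ne (not_lt.mp hle) hne
  have hIoi : ∀ j : Fin n, k < j → (π j : ℕ) < n - 1 - (k : ℕ) := by
    intro j hj
    have hsub : (Finset.Iic k).image π ⊆ Finset.Ioi (π j) := by
      intro v hv
      simp only [Finset.mem_image, Finset.mem_Iic] at hv
      obtain ⟨i, hi, rfl⟩ := hv
      rcases lt_or_eq_of_le hi with h | h
      · exact Finset.mem_Ioi.mpr (key i j h hj)
      · subst h; exact Finset.mem_Ioi.mpr (hmax j (ne_of_gt hj))
    have hcard := Finset.card_le_card hsub
    rw [Finset.card_image_of_injective _ π.injective, Fin.card_Iic, Fin.card_Ioi] at hcard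
    omega
  have hIio : ∀ i : Fin n, i < k → n - 1 - (k : ℕ) ≤ (π i : ℕ) := by
    intro i hi
    have hsub : (Finset.Ioi k).image π ⊆ Finset.Iio (π i) := by
      intro v hv
      simp only [Finset.mem_image, Finset.mem_Ioi] at hv
      obtain ⟨j, hj, rfl⟩ := hv
      exact Finset.mem_Iio.mpr (key i j hi hj)
    have hcard := Finset.card_le_card hsub
    rw [Finset.card_image_of_injective _ π.injective, Fin.card_Ioi, Fin.card_Iio] at hcard
    omega
  refine ⟨key, ?_, ?_⟩
  · intro v
    constructor
    · rintro ⟨i, hi, rfl⟩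
      refine ⟨hIio i hi, ?_⟩
      have := hmax i (ne_of_lt hi)
      have : (π i : ℕ) < (π k : ℕ) := this
      omega
    · rintro ⟨h1, h2⟩
      refine ⟨π.symm v, ?_, π.apply_symm_apply v⟩
      rcases lt_trichotomy (π.symm v) k with h | h | h
      · exact h
      · exfalso
        have : π (π.symm v) = π k := by rw [h]
        rw [π.apply_symm_apply] at this
        have : (v : ℕ) = n - 1 := by rw [this]; exact hk
        omega
      · exfalso
        have := hIoi (π.symm v) h
        rw [π.apply_symm_apply] at this
        omega
  · intro v
    constructor
    · rintro ⟨j, hj, rfl⟩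
      exact hIoi j hj
    · intro h1
      refine ⟨π.symm v, ?_, π.apply_symm_apply v⟩
      rcases lt_trichotomy (π.symm v) k with h | h | h
      · exfalso
        have := hIio (π.symm v) h
        rw [π.apply_symm_apply] at this
        omega
      · exfalso
        have : π (π.symm v) = π k := by rw [h]
        rw [π.apply_symm_apply] at this
        have hv : (v : ℕ) = n - 1 := by rw [this]; exact hk
        have hkn : (k : ℕ) < n := k.isLt
        omega
      · exact h
end

section
/- Let n ≥ 1 and let π be a permutation of {0,...,n-1} (π : Equiv.Perm (Fin n)) with π(k) = n-1. Then π avoids 132 if and only if all three of the following hold: (1) for all indices i < k < j, π(j) < π(i); (2) there is no triple of indices i₁ < i₂ < i₃ all less than k with π(i₁) < π(i₃) < π(i₂); and (3) there is no triple of indices i₁ < i₂ < i₃ all greater than k with π(i₁) < π(i₃) < π(i₂). -/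
theorem avoids132_iff_parts_avoid (n : ℕ) (hn : 1 ≤ n) (π : Equiv.Perm (Fin n))
    (k : Fin n) (hk : (π k : ℕ) = n - 1) :
    (∀ i₁ i₂ i₃ : Fin n, i₁ < i₂ → i₂ < i₃ → ¬(π i₁ < π i₃ ∧ π i₃ < π i₂)) ↔
    ((∀ i j : Fin n, i < k → k < j → π j < π i) ∧
     (∀ i₁ i₂ i₃ : Fin n, i₁ < i₂ → i₂ < i₃ → i₃ < k →
       ¬(π i₁ < π i₃ ∧ π i₃ < π i₂)) ∧
     (∀ i₁ i₂ i₃ : Fin n, k < i₁ → i₁ < i₂ → i₂ < i₃ →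
       ¬(π i₁ < π i₃ ∧ π i₃ < π i₂))) := by
  have hmax : ∀ j : Fin n, j ≠ k → π j < π k := by
    intro j hj
    have h1 : (π j : ℕ) ≤ n - 1 := Nat.le_sub_one_of_lt (π j).isLt
    have h2 : π j ≠ π k := fun h => hj (π.injective h)
    have : (π j : ℕ) ≤ (π k : ℕ) := hk ▸ h1
    exact lt_of_le_of_ne (Fin.le_def.mpr this) h2
  constructor
  · intro H
    refine ⟨?_, ?_, ?_⟩
    · intro i j hik hkj
      by_contra hle
      push_neg at hle
      have hne : π i ≠ π j := fun h => (ne_of_lt (hik.trans hkj)) (π.injective h)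
      have hij : π i < π j := lt_of_le_of_ne hle hne
      exact H i k j hik hkj ⟨hij, hmax j (ne_of_gt hkj)⟩
    · exact fun i₁ i₂ i₃ h1 h2 _ => H i₁ i₂ i₃ h1 h2
    · exact fun i₁ i₂ i₃ _ h1 h2 => H i₁ i₂ i₃ h1 h2
  · rintro ⟨H1, H2, H3⟩ i₁ i₂ i₃ h12 h23 ⟨ha, hb⟩
    rcases lt_trichotomy i₃ k with h3 | h3 | h3
    · exact H2 i₁ i₂ i₃ h12 h23 h3 ⟨ha, hb⟩
    · subst h3
      exact absurd hb (not_lt.mpr (le_of_lt (hmax i₂ (ne_of_lt h23))))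
    · rcases lt_trichotomy i₁ k with h1 | h1 | h1
      · exact absurd ha (not_lt.mpr (le_of_lt (H1 i₁ i₃ h1 h3)))
      · subst h1
        exact absurd ha (not_lt.mpr (le_of_lt (hmax i₃ (ne_of_gt h3))))
      · exact H3 i₁ i₂ i₃ h1 h12 h23 ⟨ha, hb⟩
end

section
/- Let n ≥ 1 and let π be a permutation of {0,...,n-1} (π : Equiv.Perm (Fin n)) with π(k) = n-1, and suppose that for all indices i < k < j one has π(j) < π(i). Then the number of 123 patterns of π equals the number of triples i₁ < i₂ < i₃ < k with π(i₁) < π(i₂) < π(i₃), plus the number of triples k < i₁ < i₂ < i₃ with π(i₁) < π(i₂) < π(i₃), plus the number of pairs i₁ < i₂ < k with π(i₁) < π(i₂). -/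
theorem count123_split (n : ℕ) (hn : 1 ≤ n) (π : Equiv.Perm (Fin n))
    (k : Fin n) (hk : (π k : ℕ) = n - 1)
    (hsplit : ∀ i j : Fin n, i < k → k < j → π j < π i) :
    count123 π =
      (Finset.univ.filter (fun p : Fin n × Fin n × Fin n =>
        p.1 < p.2.1 ∧ p.2.1 < p.2.2 ∧ p.2.2 < k ∧
        π p.1 < π p.2.1 ∧ π p.2.1 < π p.2.2)).card +
      (Finset.univ.filter (fun p : Fin n × Fin n × Fin n =>
        k < p.1 ∧ p.1 < p.2.1 ∧ p.2.1 < p.2.2 ∧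
        π p.1 < π p.2.1 ∧ π p.2.1 < π p.2.2)).card +
      (Finset.univ.filter (fun p : Fin n × Fin n =>
        p.1 < p.2 ∧ p.2 < k ∧ π p.1 < π p.2)).card := by
  classical
  have hmax : ∀ x : Fin n, x ≠ k → π x < π k := by
    intro x hx
    have hne : π x ≠ π k := fun h => hx (π.injective h)
    have h1 : (π x : ℕ) < n := (π x).isLt
    have h2 : (π x : ℕ) ≠ (π k : ℕ) := fun h => hne (Fin.val_injective h)
    have : (π x : ℕ) < (π k : ℕ) := by omega
    exact this
  set A := (Finset.univ.filter (fun p : Fin n × Fin n × Fin n =>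
        p.1 < p.2.1 ∧ p.2.1 < p.2.2 ∧ p.2.2 < k ∧
        π p.1 < π p.2.1 ∧ π p.2.1 < π p.2.2)) with hA
  set B := (Finset.univ.filter (fun p : Fin n × Fin n × Fin n =>
        k < p.1 ∧ p.1 < p.2.1 ∧ p.2.1 < p.2.2 ∧
        π p.1 < π p.2.1 ∧ π p.2.1 < π p.2.2)) with hB
  set C := (Finset.univ.filter (fun p : Fin n × Fin n × Fin n =>
        p.1 < p.2.1 ∧ p.2.1 < p.2.2 ∧ p.2.2 = k ∧
        π p.1 < π p.2.1 ∧ π p.2.1 < π p.2.2)) with hC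
  have hunion : (Finset.univ.filter (fun p : Fin n × Fin n × Fin n =>
      p.1 < p.2.1 ∧ p.2.1 < p.2.2 ∧ π p.1 < π p.2.1 ∧ π p.2.1 < π p.2.2))
      = A ∪ B ∪ C := by
    ext p
    simp only [hA, hB, hC, Finset.mem_union, Finset.mem_filter, Finset.mem_univ, true_and]
    constructor
    · rintro ⟨h12, h23, hv1, hv2⟩
      rcases lt_trichotomy p.2.2 k with h | h | h
      · exact Or.inl (Or.inl ⟨h12, h23, h, hv1, hv2⟩)
      · exact Or.inr ⟨h12, h23, h, hv1, hv2⟩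
      · left; right
        refine ⟨?_, h12, h23, hv1, hv2⟩
        rcases lt_trichotomy p.1 k with h1 | h1 | h1
        · exact absurd (hsplit p.1 p.2.2 h1 h) (by intro hh; exact absurd (hv1.trans hv2) (asymm hh))
        · rw [h1] at hv1
          exact absurd hv1 (asymm (hmax p.2.1 (by rw [← h1]; exact (ne_of_lt h12).symm)))
        · exact h1
    · rintro ((⟨h12, h23, _, hv1, hv2⟩ | ⟨_, h12, h23, hv1, hv2⟩) | ⟨h12, h23, _, hv1, hv2⟩) <;>
        exact ⟨h12, h23, hv1, hv2⟩
  have hdAB : Disjoint A B := by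
    rw [Finset.disjoint_left]
    intro p hp hq
    simp only [hA, hB, Finset.mem_filter] at hp hq
    have := hp.2.1.trans (hp.2.2.1.trans hp.2.2.2.1)
    exact absurd (this.trans hq.2.1) (lt_irrefl p.1)
  have hdABC : Disjoint (A ∪ B) C := by
    rw [Finset.disjoint_left]
    intro p hp hq
    simp only [hA, hB, hC, Finset.mem_union, Finset.mem_filter] at hp hq
    rcases hp with hp | hp
    · have h := hp.2.2.2.1
      rw [hq.2.2.2.1] at h
      exact lt_irrefl _ h
    · have : k < p.2.2 := hp.2.1.trans (hp.2.2.1.trans hp.2.2.2.1)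
      rw [hq.2.2.2.1] at this
      exact lt_irrefl _ this
  have hcard : count123 π = A.card + B.card + C.card := by
    rw [count123, hunion, Finset.card_union_of_disjoint hdABC,
      Finset.card_union_of_disjoint hdAB]
  have hCcard : C.card = (Finset.univ.filter (fun p : Fin n × Fin n =>
        p.1 < p.2 ∧ p.2 < k ∧ π p.1 < π p.2)).card := by
    apply Finset.card_bij (fun p _ => (p.1, p.2.1))
    · intro p hp
      simp only [hC, Finset.mem_filter, Finset.mem_univ, true_and] at hp ⊢
      exact ⟨hp.1, hp.2.2.1 ▸ hp.2.1, hp.2.2.2.1⟩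
    · intro p hp q hq h
      simp only [hC, Finset.mem_filter] at hp hq
      simp only [Prod.mk.injEq] at h
      have : p.2.2 = q.2.2 := hp.2.2.2.1.trans hq.2.2.2.1.symm
      exact Prod.ext h.1 (Prod.ext h.2 this)
    · intro q hq
      simp only [Finset.mem_filter, Finset.mem_univ, true_and] at hq
      refine ⟨(q.1, q.2, k), ?_, rfl⟩
      exact Finset.mem_filter.mpr ⟨Finset.mem_univ _,
        hq.1, hq.2.1, rfl, hq.2.2, hmax q.2 (ne_of_lt hq.2.1)⟩
  rw [hcard, hCcard]
end

section
/- For each n ≥ 0, define the polynomial F_n(q,t) = ∑_π q^{#123(π)}·t^{#12(π)} ∈ ℤ[q,t], where the sum is over all permutations π of length n that avoid 132. Then F₀(q,t) = 1 and for all n ≥ 1: F_n(q,t) = ∑_{k=0}^{n-1} t^k · F_k(q, q·t) · F_{n-1-k}(q, t), where F_k(q, q·t) denotes the polynomial F_k with the variable t substituted by q·t. -/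
/-- The substitution `q ↦ q`, `t ↦ q·t` on `ℤ[q,t]`, where `q = X 0` and `t = X 1`. -/
noncomputable def subT : MvPolynomial (Fin 2) ℤ →ₐ[ℤ] MvPolynomial (Fin 2) ℤ :=
  MvPolynomial.aeval ![MvPolynomial.X 0, MvPolynomial.X 0 * MvPolynomial.X 1]

/-- `F n = ∑ q^{#123(π)} t^{#12(π)}` over 132-avoiding permutations `π` of length `n`. -/
noncomputable def F (n : ℕ) : MvPolynomial (Fin 2) ℤ :=
  ∑ π ∈ Finset.univ.filter (fun π : Equiv.Perm (Fin n) => count132 π = 0),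
    MvPolynomial.X 0 ^ count123 π * MvPolynomial.X 1 ^ count12 π

namespace FE

variable {a b : ℕ}

@[simp] lemma val_mk' {n x : ℕ} (h : x < n) : ((⟨x, h⟩ : Fin n) : ℕ) = x := rfl

lemma sum_split {M : Type*} [AddCommMonoid M] (f : Fin (a+1+b) → M) :
    ∑ i, f i = (∑ i : Fin a, f ⟨(i:ℕ), by have := i.isLt; omega⟩) + f ⟨a, by omega⟩
      + ∑ j : Fin b, f ⟨a+1+(j:ℕ), by have := j.isLt; omega⟩ := by
  rw [Fin.sum_univ_add (f := f), Fin.sum_univ_castSucc]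
  refine congrArg₂ _ (congrArg₂ _ ?_ ?_) ?_
  · exact Finset.sum_congr rfl fun i _ => congrArg f (Fin.ext (by simp))
  · exact congrArg f (Fin.ext (by simp))
  · exact Finset.sum_congr rfl fun j _ => congrArg f (Fin.ext (by simp))

lemma count12_eq {n : ℕ} (π : Equiv.Perm (Fin n)) :
    count12 π = ∑ i : Fin n, ∑ j : Fin n,
      if (i:ℕ) < (j:ℕ) ∧ ((π i : ℕ) < (π j : ℕ)) then 1 else 0 := by
  rw [count12, Finset.card_filter, Fintype.sum_prod_type]
  rfl

lemma count123_eq {n : ℕ} (π : Equiv.Perm (Fin n)) :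
    count123 π = ∑ i : Fin n, ∑ j : Fin n, ∑ k : Fin n,
      if (i:ℕ) < (j:ℕ) ∧ (j:ℕ) < (k:ℕ) ∧ (π i : ℕ) < (π j : ℕ) ∧ (π j : ℕ) < (π k : ℕ)
      then 1 else 0 := by
  rw [count123, Finset.card_filter, Fintype.sum_prod_type]
  refine Finset.sum_congr rfl fun i _ => ?_
  rw [Fintype.sum_prod_type]
  rfl

lemma count132_eq {n : ℕ} (π : Equiv.Perm (Fin n)) :
    count132 π = ∑ i : Fin n, ∑ j : Fin n, ∑ k : Fin n,
      if (i:ℕ) < (j:ℕ) ∧ (j:ℕ) < (k:ℕ) ∧ (π i : ℕ) < (π k : ℕ) ∧ (π k : ℕ) < (π j : ℕ)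
      then 1 else 0 := by
  rw [count132, Finset.card_filter, Fintype.sum_prod_type]
  refine Finset.sum_congr rfl fun i _ => ?_
  rw [Fintype.sum_prod_type]
  rfl

section kit
@[simp] lemma kA1 (i : Fin a) : (i:ℕ) < a := i.isLt
@[simp] lemma kA2 (i : Fin a) (x : ℕ) : (i:ℕ) < a + 1 + x := by have := i.isLt; omega
@[simp] lemma kA3 (x : ℕ) : a < a + 1 + x := by omega
@[simp] lemma kA4 (i : Fin a) : ¬(a < (i:ℕ)) := by have := i.isLt; omega
@[simp] lemma kA5 (i : Fin a) (x : ℕ) : ¬(a + 1 + x < (i:ℕ)) := by have := i.isLt; omega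
@[simp] lemma kA6 (x : ℕ) : ¬(a + 1 + x < a) := by omega
@[simp] lemma kB1 (x : Fin a) : b + (x:ℕ) < a + b := by have := x.isLt; omega
@[simp] lemma kB2 (x : Fin a) (y : Fin b) : ¬(b + (x:ℕ) < (y:ℕ)) := by have := y.isLt; omega
@[simp] lemma kB3 (y : Fin b) : ¬(a + b < (y:ℕ)) := by have := y.isLt; omega
@[simp] lemma kB4 (x : Fin a) : ¬(a + b < b + (x:ℕ)) := by have := x.isLt; omega
@[simp] lemma kB5 (y : Fin b) (x : Fin a) : (y:ℕ) < b + (x:ℕ) := by have := y.isLt; omega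
@[simp] lemma kB6 (y : Fin b) : (y:ℕ) < a + b := by have := y.isLt; omega
end kit



variable {a b : ℕ}

/-- toFun of the built permutation -/
def bfun (σ : Equiv.Perm (Fin a)) (τ : Equiv.Perm (Fin b)) : Fin (a+1+b) → Fin (a+1+b) :=
  fun i => if h : (i:ℕ) < a then ⟨b + σ ⟨i, h⟩, by have := (σ ⟨i, h⟩).isLt; omega⟩
    else if h2 : (i:ℕ) = a then ⟨a + b, by omega⟩
    else ⟨τ ⟨(i:ℕ) - (a+1), by have := i.isLt; omega⟩,
      by have := (τ ⟨(i:ℕ) - (a+1), by have := i.isLt; omega⟩).isLt; omega⟩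

lemma bfun_inj (σ : Equiv.Perm (Fin a)) (τ : Equiv.Perm (Fin b)) :
    Function.Injective (bfun σ τ) := by
  intro x y hxy
  unfold bfun at hxy
  split_ifs at hxy with h1 h2 h3 h4 h5 <;>
    simp only [Fin.mk.injEq] at hxy <;>
    first
    | (apply Fin.ext
       first
       | omega
       | (have h' : σ ⟨(x:ℕ), h1⟩ = σ ⟨(y:ℕ), ‹_›⟩ := Fin.ext (by omega)
          simpa using congrArg Fin.val (σ.injective h'))
       | (have h' : τ ⟨(x:ℕ)-(a+1), by have := x.isLt; omega⟩ = τ ⟨(y:ℕ)-(a+1), by have := y.isLt; omega⟩ := Fin.ext (by omega)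
          have := congrArg Fin.val (τ.injective h')
          simp at this
          have hx := x.isLt; have hy := y.isLt
          omega))
    | (exfalso
       first
       | (have := (σ ⟨(x:ℕ), ‹_›⟩).isLt; omega)
       | (have := (σ ⟨(y:ℕ), ‹_›⟩).isLt; omega)
       | (have := (τ ⟨(x:ℕ)-(a+1), by have := x.isLt; omega⟩).isLt; omega)
       | (have := (τ ⟨(y:ℕ)-(a+1), by have := y.isLt; omega⟩).isLt; omega))

noncomputable def build (σ : Equiv.Perm (Fin a)) (τ : Equiv.Perm (Fin b)) :
    Equiv.Perm (Fin (a+1+b)) :=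
  Equiv.ofBijective (bfun σ τ) ((Finite.injective_iff_bijective).mp (bfun_inj σ τ))

lemma build_val_left (σ : Equiv.Perm (Fin a)) (τ : Equiv.Perm (Fin b)) (i : Fin a)
    (h : (i : ℕ) < a+1+b) : ((build σ τ) ⟨(i:ℕ), h⟩ : ℕ) = b + σ i := by
  show (bfun σ τ _ : ℕ) = _
  unfold bfun
  rw [dif_pos (show ((⟨(i:ℕ), h⟩ : Fin (a+1+b)) : ℕ) < a from i.isLt)]

lemma build_val_mid (σ : Equiv.Perm (Fin a)) (τ : Equiv.Perm (Fin b))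
    (h : a < a+1+b) : ((build σ τ) ⟨a, h⟩ : ℕ) = a + b := by
  show (bfun σ τ _ : ℕ) = _
  unfold bfun
  rw [dif_neg (show ¬(((⟨a, h⟩ : Fin (a+1+b)) : ℕ) < a) from Nat.lt_irrefl a),
      dif_pos (show ((⟨a, h⟩ : Fin (a+1+b)) : ℕ) = a from rfl)]

lemma build_val_right (σ : Equiv.Perm (Fin a)) (τ : Equiv.Perm (Fin b)) (j : Fin b)
    (h : a+1+(j:ℕ) < a+1+b) : ((build σ τ) ⟨a+1+(j:ℕ), h⟩ : ℕ) = τ j := by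
  show (bfun σ τ _ : ℕ) = _
  unfold bfun
  rw [dif_neg (show ¬(((⟨a+1+(j:ℕ), h⟩ : Fin (a+1+b)) : ℕ) < a) from by
        show ¬(a+1+(j:ℕ) < a); omega),
      dif_neg (show ¬(((⟨a+1+(j:ℕ), h⟩ : Fin (a+1+b)) : ℕ) = a) from by
        show ¬(a+1+(j:ℕ) = a); omega)]
  have : (⟨((⟨a+1+(j:ℕ), h⟩ : Fin (a+1+b)) : ℕ) - (a+1), by have := j.isLt; show a+1+(j:ℕ)-(a+1) < b; omega⟩ : Fin b) = j := by
    apply Fin.ext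
    show a+1+(j:ℕ)-(a+1) = (j:ℕ)
    omega
  exact congrArg (fun z => ((τ z : Fin b) : ℕ)) this


lemma count12_build (σ : Equiv.Perm (Fin a)) (τ : Equiv.Perm (Fin b)) :
    count12 (build σ τ) = count12 σ + a + count12 τ := by
  simp only [count12_eq, sum_split, Finset.sum_add_distrib, build_val_left, build_val_mid,
    build_val_right, val_mk', kA1, kA2, kA3, kA4, kA5, kA6, kB1, kB2, kB3, kB4, kB5, kB6,
    Nat.add_lt_add_iff_left, lt_self_iff_false, and_true, true_and, and_false, false_and,
    if_true, if_false, Finset.sum_const_zero, Finset.sum_const, smul_eq_mul, mul_one,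
    Finset.card_univ, Fintype.card_fin, add_zero, zero_add]
  try omega

lemma count123_build (σ : Equiv.Perm (Fin a)) (τ : Equiv.Perm (Fin b)) :
    count123 (build σ τ) = count123 σ + count12 σ + count123 τ := by
  simp only [count123_eq, count12_eq, sum_split, Finset.sum_add_distrib, build_val_left,
    build_val_mid, build_val_right, val_mk', kA1, kA2, kA3, kA4, kA5, kA6, kB1, kB2, kB3, kB4,
    kB5, kB6, Nat.add_lt_add_iff_left, lt_self_iff_false, and_true, true_and, and_false,
    false_and, if_true, if_false, Finset.sum_const_zero, Finset.sum_const, smul_eq_mul, mul_one,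
    Finset.card_univ, Fintype.card_fin, add_zero, zero_add]
  try omega

lemma count132_build (σ : Equiv.Perm (Fin a)) (τ : Equiv.Perm (Fin b)) :
    count132 (build σ τ) = count132 σ + count132 τ := by
  simp only [count132_eq, sum_split, Finset.sum_add_distrib, build_val_left,
    build_val_mid, build_val_right, val_mk', kA1, kA2, kA3, kA4, kA5, kA6, kB1, kB2, kB3, kB4,
    kB5, kB6, Nat.add_lt_add_iff_left, lt_self_iff_false, and_true, true_and, and_false,
    false_and, if_true, if_false, Finset.sum_const_zero, Finset.sum_const, smul_eq_mul, mul_one,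
    Finset.card_univ, Fintype.card_fin, add_zero, zero_add]
  try omega




def midp (a b : ℕ) : Fin (a+1+b) := ⟨a, by omega⟩

lemma no132 {n : ℕ} (π : Equiv.Perm (Fin n)) (h0 : count132 π = 0) (i j k : Fin n) :
    ¬((i:ℕ) < (j:ℕ) ∧ (j:ℕ) < (k:ℕ) ∧ (π i : ℕ) < (π k : ℕ) ∧ (π k : ℕ) < (π j : ℕ)) := by
  rw [count132, Finset.card_eq_zero, Finset.filter_eq_empty_iff] at h0
  intro hcon
  exact h0 (Finset.mem_univ (i, j, k)) hcon

lemma val_injective {n : ℕ} (π : Equiv.Perm (Fin n)) {i j : Fin n}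
    (h : (π i : ℕ) = (π j : ℕ)) : (i:ℕ) = (j:ℕ) :=
  congrArg Fin.val (π.injective (Fin.ext h))

lemma top_lt (π : Equiv.Perm (Fin (a+1+b)))
    (htop : ((π (midp a b)) : ℕ) = a + b)
    (j : Fin (a+1+b)) (hj : (j:ℕ) ≠ a) : (π j : ℕ) < a + b := by
  have h1 := (π j).isLt
  rcases Nat.lt_or_ge (π j : ℕ) (a+b) with h | h
  · exact h
  · exfalso
    have : (π j : ℕ) = (π (midp a b) : ℕ) := by rw [htop]; omega
    have := val_injective π this
    simp [midp] at this
    exact hj this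

lemma cross (π : Equiv.Perm (Fin (a+1+b))) (h0 : count132 π = 0)
    (htop : ((π (midp a b)) : ℕ) = a + b)
    (i j : Fin (a+1+b)) (hi : (i:ℕ) < a) (hj : a < (j:ℕ)) : (π j : ℕ) < (π i : ℕ) := by
  by_contra hc
  push_neg at hc
  have hij : (π i : ℕ) ≠ (π j : ℕ) := fun h => by have := val_injective π h; omega
  have h1 : (π i : ℕ) < (π j : ℕ) := by omega
  have h2 : (π j : ℕ) < a + b := top_lt π htop j (by omega)
  refine no132 π h0 i (midp a b) j ⟨?_, ?_, h1, ?_⟩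
  · simpa [midp] using hi
  · simpa [midp] using hj
  · rw [htop]; exact h2

lemma left_bound (π : Equiv.Perm (Fin (a+1+b))) (h0 : count132 π = 0)
    (htop : ((π (midp a b)) : ℕ) = a + b)
    (i : Fin (a+1+b)) (hi : (i:ℕ) < a) : b ≤ (π i : ℕ) := by
  have inj : Function.Injective (fun j : Fin b =>
      (⟨((π ⟨a+1+(j:ℕ), by have := j.isLt; omega⟩ : Fin (a+1+b)) : ℕ),
        cross π h0 htop i _ hi (by show a < a+1+(j:ℕ); omega)⟩ : Fin ((π i : ℕ)))) := by
    intro x y hxy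
    simp only [Fin.mk.injEq] at hxy
    have := val_injective π hxy
    simp at this
    exact Fin.ext (by omega)
  have := Fintype.card_le_of_injective _ inj
  simpa using this

lemma right_bound (π : Equiv.Perm (Fin (a+1+b))) (h0 : count132 π = 0)
    (htop : ((π (midp a b)) : ℕ) = a + b)
    (j : Fin (a+1+b)) (hj : a < (j:ℕ)) : (π j : ℕ) < b := by
  have hjtop : (π j : ℕ) < a + b := top_lt π htop j (by omega)
  have key : ∀ i : Fin (a+1), (π j : ℕ) < (π ⟨(i:ℕ), by have := i.isLt; omega⟩ : ℕ) := by
    intro i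
    rcases Nat.lt_or_ge (i:ℕ) a with h | h
    · exact cross π h0 htop _ j (by simpa using h) hj
    · have hia : (i:ℕ) = a := by have := i.isLt; omega
      have heq : (⟨(i:ℕ), by have := i.isLt; omega⟩ : Fin (a+1+b)) = midp a b := Fin.ext hia
      rw [heq, htop]
      omega
  have inj : Function.Injective (fun i : Fin (a+1) =>
      (⟨(π ⟨(i:ℕ), by have := i.isLt; omega⟩ : ℕ) - (π j : ℕ) - 1,
        by have h1 := key i; have h2 := (π ⟨(i:ℕ), by have := i.isLt; omega⟩).isLt; omega⟩ :
        Fin (a + b - (π j : ℕ)))) := by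
    intro x y hxy
    simp only [Fin.mk.injEq] at hxy
    have hx := key x
    have hy := key y
    have := val_injective π (show (π ⟨(x:ℕ), by have := x.isLt; omega⟩ : ℕ)
      = (π ⟨(y:ℕ), by have := y.isLt; omega⟩ : ℕ) by omega)
    simp at this
    exact Fin.ext this
  have := Fintype.card_le_of_injective _ inj
  simp at this
  omega


lemma build_surj (π : Equiv.Perm (Fin (a+1+b))) (h0 : count132 π = 0)
    (htop : ((π (midp a b)) : ℕ) = a + b) :
    ∃ (σ : Equiv.Perm (Fin a)) (τ : Equiv.Perm (Fin b)), build σ τ = π := by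
  have hlb : ∀ i : Fin a, b ≤ (π ⟨(i:ℕ), by have := i.isLt; omega⟩ : ℕ) :=
    fun i => left_bound π h0 htop _ (by simpa using i.isLt)
  have hub : ∀ i : Fin a, (π ⟨(i:ℕ), by have := i.isLt; omega⟩ : ℕ) < a + b :=
    fun i => top_lt π htop _ (by have := i.isLt; simp; omega)
  have hrb : ∀ j : Fin b, (π ⟨a+1+(j:ℕ), by have := j.isLt; omega⟩ : ℕ) < b :=
    fun j => right_bound π h0 htop _ (by show a < a+1+(j:ℕ); omega)
  set fσ : Fin a → Fin a := fun i =>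
    ⟨(π ⟨(i:ℕ), by have := i.isLt; omega⟩ : ℕ) - b, by have h1 := hlb i; have h2 := hub i; omega⟩
    with hfσ
  set fτ : Fin b → Fin b := fun j =>
    ⟨(π ⟨a+1+(j:ℕ), by have := j.isLt; omega⟩ : ℕ), hrb j⟩ with hfτ
  have hinjσ : Function.Injective fσ := by
    intro x y hxy
    rw [hfσ] at hxy
    simp only [Fin.mk.injEq] at hxy
    have h1 := hlb x; have h2 := hlb y
    have := val_injective π (show (π ⟨(x:ℕ), by have := x.isLt; omega⟩ : ℕ)
      = (π ⟨(y:ℕ), by have := y.isLt; omega⟩ : ℕ) by omega)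
    simp at this
    exact Fin.ext this
  have hinjτ : Function.Injective fτ := by
    intro x y hxy
    rw [hfτ] at hxy
    simp only [Fin.mk.injEq] at hxy
    have := val_injective π hxy
    simp at this
    exact Fin.ext (by omega)
  refine ⟨Equiv.ofBijective fσ ((Finite.injective_iff_bijective).mp hinjσ),
    Equiv.ofBijective fτ ((Finite.injective_iff_bijective).mp hinjτ), ?_⟩
  apply Equiv.ext
  intro x
  apply Fin.ext
  rcases Nat.lt_trichotomy (x:ℕ) a with hxa | hxa | hxa
  · have e1 : ((build (Equiv.ofBijective fσ ((Finite.injective_iff_bijective).mp hinjσ))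
        (Equiv.ofBijective fτ ((Finite.injective_iff_bijective).mp hinjτ))) x : ℕ)
        = b + ((π x : ℕ) - b) :=
      build_val_left _ _ ⟨(x:ℕ), hxa⟩ (by have := x.isLt; omega)
    rw [e1]
    have := left_bound π h0 htop x hxa
    omega
  · have hx : x = midp a b := Fin.ext hxa
    rw [hx, htop]
    exact build_val_mid _ _ _
  · have hxx : x = ⟨a+1+((x:ℕ)-(a+1)), by have := x.isLt; omega⟩ := Fin.ext (by simp only [val_mk']; omega)
    rw [hxx]
    exact build_val_right _ _ ⟨(x:ℕ)-(a+1), by have := x.isLt; omega⟩ (by have := x.isLt; omega)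


open MvPolynomial in
lemma subT_F (a : ℕ) : subT (F a) =
    ∑ σ ∈ Finset.univ.filter (fun σ : Equiv.Perm (Fin a) => count132 σ = 0),
      (X 0 : MvPolynomial (Fin 2) ℤ) ^ count123 σ * (X 0 * X 1) ^ count12 σ := by
  rw [F, map_sum]
  refine Finset.sum_congr rfl fun σ _ => ?_
  rw [map_mul, map_pow, map_pow]
  have h0 : subT (X 0 : MvPolynomial (Fin 2) ℤ) = X 0 := by
    simp [subT]
  have h1 : subT (X 1 : MvPolynomial (Fin 2) ℤ) = X 0 * X 1 := by
    simp [subT]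
  rw [h0, h1]

open MvPolynomial in
lemma key (a b : ℕ) :
    ∑ π ∈ Finset.univ.filter (fun π : Equiv.Perm (Fin (a+1+b)) =>
        count132 π = 0 ∧ ((π (midp a b) : Fin (a+1+b)) : ℕ) = a + b),
      (X 0 : MvPolynomial (Fin 2) ℤ) ^ count123 π * X 1 ^ count12 π
    = X 1 ^ a * subT (F a) * F b := by
  rw [subT_F, F, mul_assoc, Finset.sum_mul_sum, Finset.mul_sum]
  simp only [Finset.mul_sum]
  rw [← Finset.sum_product']
  symm
  refine Finset.sum_bij (fun p _ => build p.1 p.2) ?_ ?_ ?_ ?_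
  · rintro ⟨σ, τ⟩ hp
    rw [Finset.mem_product] at hp
    obtain ⟨h1, h2⟩ := hp
    rw [Finset.mem_filter] at h1 h2
    refine Finset.mem_filter.mpr ⟨Finset.mem_univ _, ?_, ?_⟩
    · rw [count132_build, h1.2, h2.2]
    · exact build_val_mid σ τ _
  · rintro ⟨σ, τ⟩ h ⟨σ', τ'⟩ h' heq
    simp only at heq
    have hσ : σ = σ' := by
      apply Equiv.ext; intro i; apply Fin.ext
      have e1 := build_val_left σ τ i (by have := i.isLt; omega)
      have e2 := build_val_left σ' τ' i (by have := i.isLt; omega)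
      rw [heq] at e1
      omega
    have hτ : τ = τ' := by
      apply Equiv.ext; intro j; apply Fin.ext
      have e1 := build_val_right σ τ j (by have := j.isLt; omega)
      have e2 := build_val_right σ' τ' j (by have := j.isLt; omega)
      rw [heq] at e1
      omega
    simp [hσ, hτ]
  · intro π hπ
    rw [Finset.mem_filter] at hπ
    obtain ⟨-, h0, htop⟩ := hπ
    obtain ⟨σ, τ, hb⟩ := build_surj π h0 htop
    have hσ0 : count132 σ = 0 ∧ count132 τ = 0 := by
      have := count132_build σ τ
      rw [hb, h0] at this
      omega
    exact ⟨(σ, τ), Finset.mem_product.mpr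
      ⟨Finset.mem_filter.mpr ⟨Finset.mem_univ _, hσ0.1⟩,
       Finset.mem_filter.mpr ⟨Finset.mem_univ _, hσ0.2⟩⟩, hb⟩
  · rintro ⟨σ, τ⟩ -
    rw [count123_build, count12_build]
    ring


open MvPolynomial in
noncomputable def FIB (m k : ℕ) : MvPolynomial (Fin 2) ℤ :=
  ∑ π ∈ Finset.univ.filter (fun π : Equiv.Perm (Fin m) =>
      count132 π = 0 ∧ ∀ hm : m - 1 < m, ((π.symm ⟨m-1, hm⟩ : Fin m) : ℕ) = k),
    X 0 ^ count123 π * X 1 ^ count12 π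

open MvPolynomial in
lemma FIB_eq (a b : ℕ) : FIB (a+1+b) a = X 1 ^ a * subT (F a) * F b := by
  rw [← key a b, FIB]
  refine Finset.sum_congr ?_ fun _ _ => rfl
  apply Finset.filter_congr
  intro π _
  refine and_congr_right fun _ => ?_
  constructor
  · intro h
    have h1 := h (by omega)
    have h2 : π.symm ⟨a+1+b-1, by omega⟩ = midp a b := Fin.ext (by simpa [midp] using h1)
    have h3 := congrArg π h2
    rw [Equiv.apply_symm_apply] at h3
    rw [← h3]
    simp only [val_mk']
    omega
  · intro h hm
    have h2 : π (midp a b) = ⟨a+1+b-1, hm⟩ := Fin.ext (by simp only [val_mk']; omega)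
    have h3 := congrArg π.symm h2
    rw [Equiv.symm_apply_apply] at h3
    rw [← h3]
    simp [midp]

open MvPolynomial in
lemma F_eq_sum_FIB (n : ℕ) (hn : 1 ≤ n) : F n = ∑ k ∈ Finset.range n, FIB n k := by
  rw [F,
    ← Finset.sum_fiberwise (Finset.univ.filter fun π : Equiv.Perm (Fin n) => count132 π = 0)
      (fun π => π.symm ⟨n-1, by omega⟩) (fun π => X 0 ^ count123 π * X 1 ^ count12 π),
    ← Fin.sum_univ_eq_sum_range (fun k => FIB n k) n]
  refine Finset.sum_congr rfl fun j _ => ?_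
  rw [FIB, Finset.filter_filter]
  refine Finset.sum_congr ?_ fun _ _ => rfl
  apply Finset.filter_congr
  intro π _
  refine and_congr_right fun _ => ?_
  constructor
  · intro h hm
    exact congrArg Fin.val h
  · intro h
    exact Fin.ext (h (by omega))

lemma F0 : F 0 = 1 := by
  rw [F, Finset.filter_true_of_mem (fun π _ => by simp [count132])]
  have h1 : ∀ π : Equiv.Perm (Fin 0), count123 π = 0 := fun π => by simp [count123]
  have h2 : ∀ π : Equiv.Perm (Fin 0), count12 π = 0 := fun π => by simp [count12]
  rw [Finset.sum_congr rfl (fun π _ => by rw [h1 π, h2 π, pow_zero, pow_zero, mul_one])]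
  rw [Finset.sum_const, Finset.card_univ]
  simp

end FE

theorem functional_equation_F :
    F 0 = 1 ∧
    ∀ n : ℕ, 1 ≤ n →
      F n = ∑ k ∈ Finset.range n,
        (MvPolynomial.X 1 : MvPolynomial (Fin 2) ℤ) ^ k * subT (F k) * F (n - 1 - k) := by
  constructor
  · exact FE.F0
  · intro n hn
    rw [FE.F_eq_sum_FIB n hn]
    refine Finset.sum_congr rfl fun k hk => ?_
    have hk' := Finset.mem_range.mp hk
    have h3 : FE.FIB n k = FE.FIB (k+1+(n-1-k)) k := congrArg (fun m => FE.FIB m k) (by omega)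
    rw [h3, FE.FIB_eq k (n-1-k)]
end

section
/- For every n ≥ 1, the number of permutations of length n that contain no 132 pattern and no 123 pattern equals 2^{n-1}. -/
/-- `π` avoids both the 132 and 123 patterns:
no `i < j < k` with `π i` smaller than both `π j` and `π k`. -/
def Avoids {n : ℕ} (π : Equiv.Perm (Fin n)) : Prop :=
  ∀ i j k : Fin n, i < j → j < k → π i < π j → π i < π k → False

lemma avoids_iff {n : ℕ} (π : Equiv.Perm (Fin n)) :
    (count132 π = 0 ∧ count123 π = 0) ↔ Avoids π := by
  rw [count132, count123, Finset.card_eq_zero, Finset.card_eq_zero,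
    Finset.filter_eq_empty_iff, Finset.filter_eq_empty_iff]
  constructor
  · rintro ⟨h1, h2⟩ i j k hij hjk ha hb
    have hjk' : π j ≠ π k := fun h => absurd (π.injective h) (ne_of_lt hjk)
    rcases lt_or_gt_of_ne hjk' with h | h
    · exact h2 (Finset.mem_univ (i, j, k)) ⟨hij, hjk, ha, h⟩
    · exact h1 (Finset.mem_univ (i, j, k)) ⟨hij, hjk, hb, h⟩
  · intro h
    constructor
    · rintro ⟨i, j, k⟩ - ⟨hij, hjk, h1, h2⟩
      exact h i j k hij hjk (h1.trans h2) h1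
    · rintro ⟨i, j, k⟩ - ⟨hij, hjk, h1, h2⟩
      exact h i j k hij hjk h1 (h1.trans h2)

/-- Extend a permutation `σ` of `Fin n` to one of `Fin (n+1)` sending `0 ↦ p`
and `j.succ ↦ p.succAbove (σ j)`. -/
def extPerm {n : ℕ} (p : Fin (n + 1)) (σ : Equiv.Perm (Fin n)) : Equiv.Perm (Fin (n + 1)) :=
  (finSuccEquiv n).trans (σ.optionCongr.trans (finSuccEquiv' p).symm)

lemma extPerm_zero {n : ℕ} (p : Fin (n + 1)) (σ : Equiv.Perm (Fin n)) :
    extPerm p σ 0 = p := by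
  simp [extPerm]

lemma extPerm_succ {n : ℕ} (p : Fin (n + 1)) (σ : Equiv.Perm (Fin n)) (j : Fin n) :
    extPerm p σ j.succ = p.succAbove (σ j) := by
  simp [extPerm]

lemma avoids_extPerm_iff {n : ℕ} (p : Fin (n + 2)) (σ : Equiv.Perm (Fin (n + 1))) :
    Avoids (extPerm p σ) ↔ n ≤ (p : ℕ) ∧ Avoids σ := by
  constructor
  · intro h
    constructor
    · by_contra hp
      push_neg at hp
      have hπ0 : extPerm p σ 0 = p := extPerm_zero p σ
      generalize hg : extPerm p σ = π at h hπ0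
      obtain ⟨a, hπa⟩ := π.surjective ⟨n, by omega⟩
      obtain ⟨b, hπb⟩ := π.surjective ⟨n + 1, by omega⟩
      have hva : ((π a : Fin (n + 2)) : ℕ) = n := by rw [hπa]
      have hvb : ((π b : Fin (n + 2)) : ℕ) = n + 1 := by rw [hπb]
      have ha0 : a ≠ 0 := by
        rintro rfl
        rw [hπ0] at hva
        omega
      have hb0 : b ≠ 0 := by
        rintro rfl
        rw [hπ0] at hvb
        omega
      have hab : a ≠ b := by
        rintro rfl
        omega
      have h0a : π 0 < π a := by
        rw [Fin.lt_def, hπ0, hva]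
        exact hp
      have h0b : π 0 < π b := by
        rw [Fin.lt_def, hπ0, hvb]
        omega
      rcases lt_trichotomy a b with hlt | heq | hlt
      · exact h 0 a b (Fin.pos_of_ne_zero ha0) hlt h0a h0b
      · exact hab heq
      · exact h 0 b a (Fin.pos_of_ne_zero hb0) hlt h0b h0a
    · intro i j k hij hjk h1 h2
      apply h i.succ j.succ k.succ (Fin.succ_lt_succ_iff.2 hij) (Fin.succ_lt_succ_iff.2 hjk)
      · rw [extPerm_succ, extPerm_succ]
        exact Fin.succAbove_lt_succAbove_iff.2 h1
      · rw [extPerm_succ, extPerm_succ]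
        exact Fin.succAbove_lt_succAbove_iff.2 h2
  · rintro ⟨hp, hσ⟩ i j k hij hjk h1 h2
    rcases Fin.eq_zero_or_eq_succ i with rfl | ⟨i', rfl⟩
    · -- two distinct values above `p` are impossible
      rw [extPerm_zero] at h1 h2
      have hjk' : extPerm p σ j ≠ extPerm p σ k :=
        fun h => absurd ((extPerm p σ).injective h) (ne_of_lt hjk)
      have e1 : (p : ℕ) < ((extPerm p σ) j : ℕ) := Fin.lt_def.1 h1
      have e2 : (p : ℕ) < ((extPerm p σ) k : ℕ) := Fin.lt_def.1 h2
      have e3 : ((extPerm p σ) j : ℕ) ≠ ((extPerm p σ) k : ℕ) :=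
        fun h => hjk' (Fin.ext h)
      have e4 : ((extPerm p σ) j : ℕ) < n + 2 := Fin.is_lt _
      have e5 : ((extPerm p σ) k : ℕ) < n + 2 := Fin.is_lt _
      omega
    · have hj0 : j ≠ 0 := fun h => by
        rw [h] at hij; exact absurd hij (Fin.not_lt_zero _).elim
      obtain ⟨j', rfl⟩ := Fin.eq_succ_of_ne_zero hj0
      have hk0 : k ≠ 0 := fun h => by
        rw [h] at hjk; exact absurd hjk (Fin.not_lt_zero _).elim
      obtain ⟨k', rfl⟩ := Fin.eq_succ_of_ne_zero hk0
      rw [extPerm_succ, extPerm_succ, Fin.succAbove_lt_succAbove_iff] at h1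
      rw [extPerm_succ, extPerm_succ, Fin.succAbove_lt_succAbove_iff] at h2
      exact hσ i' j' k' (Fin.succ_lt_succ_iff.1 hij) (Fin.succ_lt_succ_iff.1 hjk) h1 h2

lemma card_top_two (n : ℕ) :
    (Finset.univ.filter fun p : Fin (n + 2) => n ≤ (p : ℕ)).card = 2 := by
  have h : (Finset.univ.filter fun p : Fin (n + 2) => n ≤ (p : ℕ))
      = {(⟨n, by omega⟩ : Fin (n + 2)), ⟨n + 1, by omega⟩} := by
    ext p
    have := p.is_lt
    simp only [Finset.mem_filter, Finset.mem_univ, true_and, Finset.mem_insert,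
      Finset.mem_singleton, Fin.ext_iff]
    omega
  rw [h, Finset.card_insert_of_notMem, Finset.card_singleton]
  simp [Fin.ext_iff]

lemma step (n : ℕ) :
    (Finset.univ.filter (fun π : Equiv.Perm (Fin (n + 2)) =>
      count132 π = 0 ∧ count123 π = 0)).card
    = 2 * (Finset.univ.filter (fun σ : Equiv.Perm (Fin (n + 1)) =>
      count132 σ = 0 ∧ count123 σ = 0)).card := by
  have hcard : ((Finset.univ.filter fun p : Fin (n + 2) => n ≤ (p : ℕ)) ×ˢ
      (Finset.univ.filter (fun σ : Equiv.Perm (Fin (n + 1)) =>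
        count132 σ = 0 ∧ count123 σ = 0))).card
      = (Finset.univ.filter (fun π : Equiv.Perm (Fin (n + 2)) =>
        count132 π = 0 ∧ count123 π = 0)).card := by
    apply Finset.card_nbij (fun x => extPerm x.1 x.2)
    · rintro ⟨p, σ⟩ hx
      rw [Finset.mem_coe, Finset.mem_product, Finset.mem_filter, Finset.mem_filter] at hx
      rw [Finset.mem_coe, Finset.mem_filter]
      refine ⟨Finset.mem_univ _, ?_⟩
      rw [avoids_iff, avoids_extPerm_iff]
      exact ⟨hx.1.2, (avoids_iff σ).1 hx.2.2⟩
    · rintro ⟨p, σ⟩ - ⟨q, τ⟩ - h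
      simp only at h
      have h0 : p = q := by
        have := congrArg (fun π : Equiv.Perm (Fin (n + 2)) => π 0) h
        simpa [extPerm_zero] using this
      subst h0
      have hστ : σ = τ := by
        ext j
        have := congrArg (fun π : Equiv.Perm (Fin (n + 2)) => π j.succ) h
        simp only [extPerm_succ] at this
        exact Fin.val_eq_of_eq (Fin.succAbove_right_injective this)
      rw [hστ]
    · intro π hπ
      simp only [Finset.coe_filter, Finset.mem_univ, true_and, Set.mem_setOf_eq] at hπ
      set p : Fin (n + 2) := π 0 with hp
      set ρ : Option (Fin (n + 1)) ≃ Option (Fin (n + 1)) :=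
        (finSuccEquiv (n + 1)).symm.trans (π.trans (finSuccEquiv' p)) with hρ
      set σ : Equiv.Perm (Fin (n + 1)) := Equiv.removeNone ρ with hσ
      have hext : extPerm p σ = π := by
        ext i
        rcases Fin.eq_zero_or_eq_succ i with rfl | ⟨j, rfl⟩
        · rw [extPerm_zero]
        · rw [extPerm_succ]
          have hne : π j.succ ≠ p := by
            intro h
            exact absurd (π.injective h) (Fin.succ_ne_zero j)
          have hrw2 : ρ (some j) = finSuccEquiv' p (π j.succ) := by
            simp [hρ]
          have hsome : ∃ v, ρ (some j) = some v := by
            rcases Option.eq_none_or_eq_some (ρ (some j)) with h0 | hs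
            · exfalso
              rw [h0] at hrw2
              have : π j.succ = p := by
                have := congrArg (finSuccEquiv' p).symm hrw2.symm
                simpa [finSuccEquiv'_symm_none] using this
              exact hne this
            · exact hs
          have hrw : some (σ j) = ρ (some j) := Equiv.removeNone_some ρ hsome
          have : (finSuccEquiv' p).symm (some (σ j)) = π j.succ := by
            rw [hrw, hrw2, Equiv.symm_apply_apply]
          rw [← this, finSuccEquiv'_symm_some]
      refine ⟨(p, σ), ?_, by simpa using hext⟩
      rw [Finset.coe_product, Set.mem_prod]
      constructor
      · simp only [Finset.coe_filter, Finset.mem_univ, true_and, Set.mem_setOf_eq]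
        have := (avoids_iff π).1 hπ
        rw [← hext, avoids_extPerm_iff] at this
        exact this.1
      · simp only [Finset.coe_filter, Finset.mem_univ, true_and, Set.mem_setOf_eq]
        have := (avoids_iff π).1 hπ
        rw [← hext, avoids_extPerm_iff] at this
        exact (avoids_iff σ).2 this.2
  rw [← hcard, Finset.card_product, card_top_two]

lemma aux (m : ℕ) :
    (Finset.univ.filter (fun π : Equiv.Perm (Fin (m + 1)) =>
      count132 π = 0 ∧ count123 π = 0)).card = 2 ^ m := by
  induction m with
  | zero =>
    have h : (Finset.univ.filter (fun π : Equiv.Perm (Fin 1) =>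
        count132 π = 0 ∧ count123 π = 0)) = Finset.univ := by
      apply Finset.filter_true_of_mem
      intro π _
      rw [avoids_iff]
      intro i j k hij hjk _ _
      have hi := i.is_lt
      have hj := j.is_lt
      have := Fin.lt_def.1 hij
      omega
    rw [h]
    simp [Finset.card_univ, Fintype.card_perm]
  | succ k ih =>
    rw [step k, ih]
    ring

theorem card_no132_no123 (n : ℕ) (hn : 1 ≤ n) :
    (Finset.univ.filter (fun π : Equiv.Perm (Fin n) =>
      count132 π = 0 ∧ count123 π = 0)).card = 2 ^ (n - 1) := by
  obtain ⟨m, rfl⟩ := Nat.exists_eq_add_of_le hn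
  rw [Nat.add_comm 1 m]
  simpa using aux m
end
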